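/- arXiv:2003.03906 — 14 statements merged into one kernel-verified Lean document; each statement's English description precedes it below -/
import Mathlib

section
/- Let p be an odd prime and m, n positive integers. If p^m = 2^n + 1 or p^m = 2^n - 1, then either m = 1, or (p, m, n) = (3, 2, 3) with 3^2 = 2^3 + 1. -/
open Finset

private lemma odd_dvd_two_pow {d n : ℕ} (h : d ∣ 2 ^ n) (hd : Odd d) : d = 1 := by
  obtain ⟨j, hj, rfl⟩ := (Nat.dvd_prime_pow Nat.prime_two).mp h
  rcases Nat.eq_zero_or_pos j with rfl | hj0
  · simp
  · exfalso
    have h2 : 2 ∣ 2 ^ j := dvd_pow_self 2 hj0.ne'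
    rw [Nat.odd_iff] at hd
    omega

/-- Thompson's lemma: for an odd prime `p` and positive integers `m, n`,
if `p^m = 2^n + 1` or `p^m = 2^n - 1`, then `m = 1` or `(p,m,n) = (3,2,3)`. -/
theorem thompson_lemma (p m n : ℕ) (hp : p.Prime) (hodd : Odd p)
    (hm : 1 ≤ m) (hn : 1 ≤ n)
    (h : p ^ m = 2 ^ n + 1 ∨ p ^ m + 1 = 2 ^ n) :
    m = 1 ∨ (p = 3 ∧ m = 2 ∧ n = 3) := by
  have hp3 : 3 ≤ p := by
    have h2 := hp.two_le
    have := Nat.odd_iff.mp hodd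
    omega
  rcases Nat.even_or_odd m with hme | hmo
  · -- m even
    obtain ⟨k, rfl⟩ := hme
    have hk1 : 1 ≤ k := by omega
    set a := p ^ k with ha
    have haodd : Odd a := hodd.pow
    have ha3 : 3 ≤ a := le_trans hp3 (Nat.le_self_pow (by omega) p)
    have hsq : p ^ (k + k) = a * a := by rw [ha, ← pow_add]
    rcases h with h1 | h2
    · -- p^m = 2^n + 1
      right
      rw [hsq] at h1
      obtain ⟨c, hc⟩ := Nat.exists_eq_add_of_le ha3
      have key : (2 + c) * (4 + c) = 2 ^ n := by nlinarith [h1, hc]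
      have hd1 : (2 + c) ∣ 2 ^ n := ⟨4 + c, key.symm⟩
      have hd2 : (4 + c) ∣ 2 ^ n := ⟨2 + c, by rw [← key]; ring⟩
      obtain ⟨s, hs, hseq⟩ := (Nat.dvd_prime_pow Nat.prime_two).mp hd1
      obtain ⟨t, ht, hteq⟩ := (Nat.dvd_prime_pow Nat.prime_two).mp hd2
      have ht2 : 2 ≤ t := by
        by_contra h'
        push_neg at h'
        interval_cases t <;> norm_num at hteq <;> omega
      have hc0 : c = 0 := by
        by_contra hc0
        have hs2 : 2 ≤ s := by
          rcases Nat.lt_or_ge s 2 with h' | h'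
          · exfalso; interval_cases s <;> norm_num at hseq <;> omega
          · exact h'
        have d1 : (4:ℕ) ∣ 2 ^ s := by
          calc (4:ℕ) = 2 ^ 2 := by norm_num
          _ ∣ 2 ^ s := pow_dvd_pow 2 hs2
        have d2 : (4:ℕ) ∣ 2 ^ t := by
          calc (4:ℕ) = 2 ^ 2 := by norm_num
          _ ∣ 2 ^ t := pow_dvd_pow 2 ht2
        omega
      have ha3' : a = 3 := by omega
      have hpeq : p = 3 := by
        have hdvd : p ∣ a := dvd_pow_self p (by omega)
        rw [ha3'] at hdvd
        have := Nat.le_of_dvd (by norm_num) hdvd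
        omega
      have hk' : k = 1 := by
        have h3k : p ^ k = p ^ 1 := by rw [pow_one, ← ha, ha3', hpeq]
        exact Nat.pow_right_injective hp.two_le h3k
      refine ⟨hpeq, by omega, ?_⟩
      have h8 : (2:ℕ) ^ n = 2 ^ 3 := by rw [ha3'] at h1; norm_num; omega
      exact Nat.pow_right_injective (by norm_num) h8
    · -- p^m + 1 = 2^n
      exfalso
      rw [hsq] at h2
      have hmod : a % 4 = 1 ∨ a % 4 = 3 := by
        have h1 := Nat.odd_iff.mp haodd
        have h2 := Nat.mod_mod_of_dvd a (by norm_num : 2 ∣ 4)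
        omega
      have hsqmod : a * a % 4 = 1 := by
        rw [Nat.mul_mod]
        rcases hmod with h' | h' <;> rw [h'] <;> norm_num
      have hn2 : n = 1 := by
        by_contra h'
        have hn2' : 2 ≤ n := by omega
        have : (4:ℕ) ∣ 2 ^ n := by
          calc (4:ℕ) = 2 ^ 2 := by norm_num
          _ ∣ 2 ^ n := pow_dvd_pow 2 hn2'
        omega
      rw [hn2] at h2
      norm_num at h2
      have h9 : 9 ≤ a * a := Nat.mul_le_mul ha3 ha3
      omega
  · -- m odd
    left
    rcases h with h1 | h2
    · -- p^m = 2^n + 1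
      set S := ∑ i ∈ Finset.range m, p ^ i with hS
      have h1' : ((p:ℤ)) ^ m = 2 ^ n + 1 := by exact_mod_cast h1
      have hScast : (S:ℤ) = ∑ i ∈ Finset.range m, (p:ℤ) ^ i := by push_cast [hS]; rfl
      have hkey : (S:ℤ) * ((p:ℤ) - 1) = 2 ^ n := by
        rw [hScast, geom_sum_mul, h1']; ring
      have hdvd : S ∣ 2 ^ n := by
        have : (S:ℤ) ∣ ((2 ^ n : ℕ) : ℤ) := ⟨(p:ℤ) - 1, by push_cast; exact hkey.symm⟩
        exact_mod_cast this
      have hSodd : Odd S := by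
        have hterm : ∀ i ∈ Finset.range m, p ^ i % 2 = 1 := fun i _ => by
          rw [Nat.pow_mod, Nat.odd_iff.mp hodd, one_pow]; omega
        rw [Nat.odd_iff, hS, Finset.sum_nat_mod, Finset.sum_congr rfl hterm]
        simp [Nat.odd_iff.mp hmo]
      have hS1 : S = 1 := odd_dvd_two_pow hdvd hSodd
      by_contra hne
      have hm2 : 2 ≤ m := by omega
      have : p ^ 1 ≤ S :=
        Finset.single_le_sum (f := fun i => p ^ i) (fun i _ => Nat.zero_le _)
          (Finset.mem_range.mpr hm2)
      simp at this
      omega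
    · -- p^m + 1 = 2^n
      set T := ∑ i ∈ Finset.range m, (-(p:ℤ)) ^ i with hT
      have h2' : ((p:ℤ)) ^ m + 1 = 2 ^ n := by exact_mod_cast h2
      have hneg : (-(p:ℤ)) ^ m = -((p:ℤ)) ^ m := Odd.neg_pow hmo _
      have hg := geom_sum_mul (-(p:ℤ)) m
      rw [hneg] at hg
      have hkey : T * ((p:ℤ) + 1) = 2 ^ n := by
        rw [hT]
        linear_combination -hg + h2'
      have hTodd : ¬ (2:ℤ) ∣ T := by
        intro hd
        have hz : ((T : ℤ) : ZMod 2) = 0 := (ZMod.intCast_zmod_eq_zero_iff_dvd T 2).mpr hd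
        have hp2 : ((p:ℕ) : ZMod 2) = 1 := by
          rw [← ZMod.natCast_mod, Nat.odd_iff.mp hodd]; norm_num
        rw [hT] at hz
        push_cast at hz
        rw [hp2] at hz
        simp at hz
        rw [ZMod.natCast_eq_zero_iff_even, Nat.even_iff] at hz
        rw [Nat.odd_iff] at hmo
        omega
      have hTdvd : T.natAbs ∣ 2 ^ n := by
        have h1 : T ∣ ((2 ^ n : ℕ) : ℤ) := ⟨(p:ℤ) + 1, by push_cast; exact hkey.symm⟩
        have := Int.natAbs_dvd_natAbs.mpr h1
        rwa [Int.natAbs_natCast] at this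
      have hTabsodd : Odd T.natAbs := by
        rcases Nat.even_or_odd T.natAbs with he | ho
        · exact absurd (Int.natAbs_dvd_natAbs.mp (by simpa using he.two_dvd)) hTodd
        · exact ho
      have hT1 : T.natAbs = 1 := odd_dvd_two_pow hTdvd hTabsodd
      have hTpos : T = 1 := by
        rcases Int.natAbs_eq_iff.mp hT1 with h' | h'
        · exact h'
        · exfalso
          rw [h'] at hkey
          have hpow : (0:ℤ) < 2 ^ n := by positivity
          nlinarith
      rw [hTpos, one_mul] at hkey
      have hpm : ((p:ℤ)) ^ m = (p:ℤ) := by linarith [h2', hkey]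
      have hmp : p ^ m = p ^ 1 := by rw [pow_one]; exact_mod_cast hpm
      exact Nat.pow_right_injective hp.two_le hmp
end

section
/- If (a_0, a_1, a_2, a_3) is an arithmetic progression of positive integers with 1 ≤ a_0 < a_1, gcd(a_0, a_1 - a_0) = 1, and the set of prime divisors of a_0 · a_1 · a_2 · a_3 has at most two elements, then (a_0, a_1, a_2, a_3) = (1, 2, 3, 4). -/
/-- The gcd of two terms of a primitive arithmetic progression divides the index gap. -/
lemma ap_gcd_dvd (u d m : ℕ) (h : Nat.Coprime u d) :
    Nat.gcd u (u + m * d) ∣ m := by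
  have h1 : Nat.gcd u (u + m * d) ∣ m * d := by
    have := Nat.dvd_sub (Nat.gcd_dvd_right u (u + m * d)) (Nat.gcd_dvd_left u (u + m * d))
    simpa using this
  have hcd : Nat.Coprime (Nat.gcd u (u + m * d)) d :=
    Nat.Coprime.coprime_dvd_left (Nat.gcd_dvd_left _ _) h
  exact hcd.dvd_of_dvd_mul_right h1

/-- A primitive 4-term arithmetic progression of positive integers involving
at most two primes must be `(1,2,3,4)`. -/
theorem ap4_two_primes (a₀ d : ℕ) (ha : 1 ≤ a₀) (hd : 1 ≤ d)
    (hprim : Nat.Coprime a₀ d)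
    (hprimes : (a₀ * (a₀ + d) * (a₀ + 2 * d) * (a₀ + 3 * d)).primeFactors.card ≤ 2) :
    a₀ = 1 ∧ d = 1 := by
  set N := a₀ * (a₀ + d) * (a₀ + 2 * d) * (a₀ + 3 * d) with hN
  have hN0 : N ≠ 0 := by positivity
  -- gcd facts
  have hc1 : Nat.Coprime (a₀ + d) d := by
    simpa using (Nat.coprime_add_mul_right_left a₀ d 1).mpr hprim
  have hc2 : Nat.Coprime (a₀ + 2 * d) d := (Nat.coprime_add_mul_right_left a₀ d 2).mpr hprim
  have g01 : Nat.gcd a₀ (a₀ + d) = 1 := by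
    have h := ap_gcd_dvd a₀ d 1 hprim
    rw [one_mul] at h
    exact Nat.eq_one_of_dvd_one h
  have g12 : Nat.gcd (a₀ + d) (a₀ + 2 * d) = 1 := by
    have h := ap_gcd_dvd (a₀ + d) d 1 hc1
    rw [one_mul, show a₀ + d + d = a₀ + 2 * d by ring] at h
    exact Nat.eq_one_of_dvd_one h
  have g23 : Nat.gcd (a₀ + 2 * d) (a₀ + 3 * d) = 1 := by
    have h := ap_gcd_dvd (a₀ + 2 * d) d 1 hc2
    rw [one_mul, show a₀ + 2 * d + d = a₀ + 3 * d by ring] at h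
    exact Nat.eq_one_of_dvd_one h
  have g13 : Nat.gcd (a₀ + d) (a₀ + 3 * d) ∣ 2 := by
    have h := ap_gcd_dvd (a₀ + d) d 2 hc1
    rwa [show a₀ + d + 2 * d = a₀ + 3 * d by ring] at h
  have g02 : Nat.gcd a₀ (a₀ + 2 * d) ∣ 2 := ap_gcd_dvd a₀ d 2 hprim
  -- divisibility of terms into N
  have d0 : a₀ ∣ N := ⟨(a₀ + d) * (a₀ + 2 * d) * (a₀ + 3 * d), by ring⟩
  have d1 : (a₀ + d) ∣ N := ⟨a₀ * (a₀ + 2 * d) * (a₀ + 3 * d), by ring⟩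
  have d2 : (a₀ + 2 * d) ∣ N := ⟨a₀ * (a₀ + d) * (a₀ + 3 * d), by ring⟩
  have d3 : (a₀ + 3 * d) ∣ N := ⟨a₀ * (a₀ + d) * (a₀ + 2 * d), by ring⟩
  have memS : ∀ p t : ℕ, p.Prime → p ∣ t → t ∣ N → p ∈ N.primeFactors := by
    intro p t hp hpt htN
    exact Nat.mem_primeFactors.mpr ⟨hp, hpt.trans htN, hN0⟩
  -- primes of each term beyond the first
  obtain ⟨p, hp, hp1⟩ := Nat.exists_prime_and_dvd (n := a₀ + d) (by omega)
  obtain ⟨q, hq, hq2⟩ := Nat.exists_prime_and_dvd (n := a₀ + 2 * d) (by omega)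
  obtain ⟨r, hr, hr3⟩ := Nat.exists_prime_and_dvd (n := a₀ + 3 * d) (by omega)
  have hpS : p ∈ N.primeFactors := memS p _ hp hp1 d1
  have hqS : q ∈ N.primeFactors := memS q _ hq hq2 d2
  have hrS : r ∈ N.primeFactors := memS r _ hr hr3 d3
  have hpq : p ≠ q := by
    intro h; subst h
    have : p ∣ Nat.gcd (a₀ + d) (a₀ + 2 * d) := Nat.dvd_gcd hp1 hq2
    rw [g12] at this
    exact hp.one_lt.ne' (Nat.eq_one_of_dvd_one this)
  have hqr : q ≠ r := by
    intro h; subst h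
    have : q ∣ Nat.gcd (a₀ + 2 * d) (a₀ + 3 * d) := Nat.dvd_gcd hq2 hr3
    rw [g23] at this
    exact hq.one_lt.ne' (Nat.eq_one_of_dvd_one this)
  have hpr : p = r := by
    by_contra hne
    have hsub : ({p, q, r} : Finset ℕ) ⊆ N.primeFactors := by
      intro x hx
      simp only [Finset.mem_insert, Finset.mem_singleton] at hx
      rcases hx with rfl | rfl | rfl <;> assumption
    have hcard : ({p, q, r} : Finset ℕ).card = 3 :=
      Finset.card_eq_three.mpr ⟨p, q, r, hpq, hne, hqr, rfl⟩
    have := Finset.card_le_card hsub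
    omega
  subst hpr
  -- the shared prime is 2
  have hp2 : p = 2 := by
    have : p ∣ 2 := (Nat.dvd_gcd hp1 hr3).trans g13
    exact (Nat.prime_dvd_prime_iff_eq hp Nat.prime_two).mp this
  subst hp2
  -- the prime factors of N are exactly {2, q}
  have hS : N.primeFactors = {2, q} := by
    symm
    apply Finset.eq_of_subset_of_card_le
    · intro x hx
      rcases Finset.mem_insert.mp hx with rfl | hx
      · exact hpS
      · rw [Finset.mem_singleton] at hx
        subst hx
        exact hqS
    · have h2q : ({2, q} : Finset ℕ).card = 2 := by
        rw [Finset.card_insert_of_notMem (by simpa using hpq), Finset.card_singleton]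
      rw [h2q]
      exact hprimes
  have primes_of_term : ∀ s t : ℕ, s.Prime → s ∣ t → t ∣ N → s = 2 ∨ s = q := by
    intro s t hs hst htN
    have : s ∈ N.primeFactors := memS s t hs hst htN
    rw [hS] at this
    simpa using this
  -- a₀ = 1
  have ha0 : a₀ = 1 := by
    by_contra h
    obtain ⟨s, hs, hsa⟩ := Nat.exists_prime_and_dvd h
    rcases primes_of_term s a₀ hs hsa d0 with rfl | hsq
    · have : (2 : ℕ) ∣ Nat.gcd a₀ (a₀ + d) := Nat.dvd_gcd hsa hp1
      rw [g01] at this; omega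
    · have h1 : s ∣ Nat.gcd a₀ (a₀ + 2 * d) :=
        Nat.dvd_gcd hsa (by rw [hsq]; exact hq2)
      have h3 : s = 2 := (Nat.prime_dvd_prime_iff_eq hs Nat.prime_two).mp (h1.trans g02)
      exact hpq (h3 ▸ hsq)
  -- any term ≥ 3 coprime to a₀ + 2d is divisible by 4
  have hpow : ∀ t : ℕ, 3 ≤ t → t ∣ N → Nat.gcd t (a₀ + 2 * d) = 1 → (4 : ℕ) ∣ t := by
    intro t ht htN hcop
    have hall : ∀ {s : ℕ}, s.Prime → s ∣ t → s = 2 := by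
      intro s hs hst
      rcases primes_of_term s t hs hst htN with h2 | hsq
      · exact h2
      · exfalso
        have : s ∣ Nat.gcd t (a₀ + 2 * d) :=
          Nat.dvd_gcd hst (by rw [hsq]; exact hq2)
        rw [hcop] at this
        exact hs.one_lt.ne' (Nat.eq_one_of_dvd_one this)
    obtain ⟨k, heq⟩ : ∃ k, t = 2 ^ k :=
      ⟨_, Nat.eq_prime_pow_of_unique_prime_dvd (by omega) hall⟩
    have hk : 2 ≤ k := by
      by_contra hk
      interval_cases k <;> omega
    have h4 : (2 : ℕ) ^ 2 ∣ 2 ^ k := pow_dvd_pow 2 hk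
    rw [heq]
    simpa using h4
  -- d = 1
  have hd1 : d = 1 := by
    by_contra h
    have hd2 : 2 ≤ d := by omega
    have h4a : (4 : ℕ) ∣ a₀ + d := hpow _ (by omega) d1 g12
    have h4b : (4 : ℕ) ∣ a₀ + 3 * d := hpow _ (by omega) d3 (by
      rw [Nat.gcd_comm]; exact g23)
    have : (4 : ℕ) ∣ 2 := (Nat.dvd_gcd h4a h4b).trans g13
    omega
  exact ⟨ha0, hd1⟩
end

section
/- There is no arithmetic progression (a_0, a_1, a_2, a_3, a_4) of positive integers of length 5 with 1 ≤ a_0 < a_1, gcd(a_0, a_1 - a_0) = 1, such that the terms collectively have at most two distinct prime divisors. -/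
/-- There is no primitive 5-term arithmetic progression of positive integers
involving at most two primes. -/
theorem no_ap5_two_primes (a₀ d : ℕ) (ha : 1 ≤ a₀) (hd : 1 ≤ d)
    (hprim : Nat.Coprime a₀ d)
    (hprimes : (a₀ * (a₀ + d) * (a₀ + 2 * d) * (a₀ + 3 * d) * (a₀ + 4 * d)).primeFactors.card ≤ 2) :
    False := by
  set N := a₀ * (a₀ + d) * (a₀ + 2 * d) * (a₀ + 3 * d) * (a₀ + 4 * d) with hNdef
  have hN : N ≠ 0 := by positivity
  -- a prime dividing two terms divides the difference of indices
  have hnd : ∀ x : ℕ, x.Prime → ∀ i : ℕ, x ∣ a₀ + i * d → ¬ x ∣ d := by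
    intro x hx i hxi hxd
    have h1 : x ∣ a₀ := by
      have : x ∣ i * d := Dvd.dvd.mul_left hxd i
      have h2 : a₀ = (a₀ + i * d) - i * d := by omega
      rw [h2]; exact Nat.dvd_sub hxi this
    have := Nat.dvd_gcd h1 hxd
    rw [hprim] at this
    exact hx.one_lt.ne' (Nat.dvd_one.mp this)
  have key : ∀ x i j k : ℕ, x.Prime → (a₀ + j * d) - (a₀ + i * d) = k * d →
      x ∣ a₀ + i * d → x ∣ a₀ + j * d → x ∣ k := by
    intro x i j k hx heq hxi hxj
    have h1 : x ∣ k * d := heq ▸ Nat.dvd_sub hxj hxi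
    have hcop : Nat.Coprime x d := (Nat.Prime.coprime_iff_not_dvd hx).mpr (hnd x hx i hxi)
    exact (Nat.Coprime.dvd_of_dvd_mul_right hcop h1)
  -- prime factors of terms are in N.primeFactors
  have mem1 : ∀ x : ℕ, x.Prime → x ∣ a₀ + d → x ∈ N.primeFactors := by
    intro x hx hdvd
    exact Nat.mem_primeFactors.mpr ⟨hx,
      dvd_mul_of_dvd_left (dvd_mul_of_dvd_left (dvd_mul_of_dvd_left
        (dvd_mul_of_dvd_right hdvd a₀) _) _) _, hN⟩
  have mem2 : ∀ x : ℕ, x.Prime → x ∣ a₀ + 2 * d → x ∈ N.primeFactors := by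
    intro x hx hdvd
    exact Nat.mem_primeFactors.mpr ⟨hx,
      dvd_mul_of_dvd_left (dvd_mul_of_dvd_left (dvd_mul_of_dvd_right hdvd _) _) _, hN⟩
  have mem3 : ∀ x : ℕ, x.Prime → x ∣ a₀ + 3 * d → x ∈ N.primeFactors := by
    intro x hx hdvd
    exact Nat.mem_primeFactors.mpr ⟨hx,
      dvd_mul_of_dvd_left (dvd_mul_of_dvd_right hdvd _) _, hN⟩
  have mem4 : ∀ x : ℕ, x.Prime → x ∣ a₀ + 4 * d → x ∈ N.primeFactors := by
    intro x hx hdvd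
    exact Nat.mem_primeFactors.mpr ⟨hx, dvd_mul_of_dvd_right hdvd _, hN⟩
  -- pick prime factors of the four terms
  obtain ⟨p, hp, hp1⟩ := Nat.exists_prime_and_dvd (n := a₀ + d) (by omega)
  obtain ⟨q, hq, hq2⟩ := Nat.exists_prime_and_dvd (n := a₀ + 2 * d) (by omega)
  obtain ⟨r, hr, hr3⟩ := Nat.exists_prime_and_dvd (n := a₀ + 3 * d) (by omega)
  obtain ⟨s, hs, hs4⟩ := Nat.exists_prime_and_dvd (n := a₀ + 4 * d) (by omega)
  have hp1' : p ∣ a₀ + 1 * d := by simpa using hp1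
  -- p ≠ q
  have hpq : p ≠ q := by
    rintro rfl
    have := key p 1 2 1 hp (by ring_nf; omega) hp1' hq2
    exact hp.one_lt.ne' (Nat.dvd_one.mp this)
  -- any prime factor of N equals p or q
  have hmem : ∀ x : ℕ, x ∈ N.primeFactors → x = p ∨ x = q := by
    intro x hx
    by_contra hcon
    push_neg at hcon
    have hsub : ({x, p, q} : Finset ℕ) ⊆ N.primeFactors := by
      intro y hy
      simp only [Finset.mem_insert, Finset.mem_singleton] at hy
      rcases hy with rfl | rfl | rfl
      · exact hx
      · exact mem1 _ hp hp1
      · exact mem2 _ hq hq2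
    have hcard : ({x, p, q} : Finset ℕ).card = 3 := by
      rw [Finset.card_insert_of_notMem (by simp [hcon.1, hcon.2]),
        Finset.card_insert_of_notMem (by simp [hpq]), Finset.card_singleton]
    have := Finset.card_le_card hsub
    omega
  -- r = p and p = 2
  have hrq : r ≠ q := by
    rintro rfl
    have := key r 2 3 1 hr (by ring_nf; omega) hq2 hr3
    exact hr.one_lt.ne' (Nat.dvd_one.mp this)
  have hrp : r = p := (hmem r (mem3 r hr hr3)).resolve_right hrq
  have hp2 : p = 2 := by
    have := key p 1 3 2 hp (by ring_nf; omega) hp1' (hrp ▸ hr3)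
    exact (Nat.prime_dvd_prime_iff_eq hp Nat.prime_two).mp this
  -- s = q and q = 2, contradiction
  have hsp : s ≠ p := by
    rintro rfl
    have := key s 3 4 1 hs (by ring_nf; omega) (hrp ▸ hr3) hs4
    exact hs.one_lt.ne' (Nat.dvd_one.mp this)
  have hsq : s = q := (hmem s (mem4 s hs hs4)).resolve_left hsp
  have hq2' : q = 2 := by
    have := key q 2 4 2 hq (by ring_nf; omega) hq2 (hsq ▸ hs4)
    exact (Nat.prime_dvd_prime_iff_eq hq Nat.prime_two).mp this
  exact hpq (hp2.trans hq2'.symm)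
end

section
/- Suppose (1, a_1, a_2) is a primitive arithmetic progression of positive integers with 1 < a_1 < a_2 whose terms involve exactly the two primes 2 and q for some odd prime q, with a_1 a power of 2. Then a_1 = 2^α and a_2 = 2^{α+1} - 1 for some α ≥ 1, and 2^{α+1} - 1 is a Mersenne prime. -/
/-- If `(1, a₁, a₂)` is an arithmetic progression with `1 < a₁ < a₂`, involving
exactly the primes `2` and `q` (`q` odd), and `a₁` is a power of `2`, then
`a₁ = 2^α` and `a₂ = 2^(α+1) - 1` is a Mersenne prime. -/
theorem ap_one_pow_two_mersenne (a₁ a₂ q : ℕ) (h1 : 1 < a₁) (h2 : a₁ < a₂)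
    (hap : 1 + a₂ = 2 * a₁) (hq : q.Prime) (hqodd : Odd q)
    (hprimes : (a₁ * a₂).primeFactors = {2, q})
    (hpow : ∃ k : ℕ, a₁ = 2 ^ k) :
    ∃ α : ℕ, 1 ≤ α ∧ a₁ = 2 ^ α ∧ a₂ = 2 ^ (α + 1) - 1 ∧ (2 ^ (α + 1) - 1).Prime := by
  obtain ⟨k, hk⟩ := hpow
  subst hk
  have hk1 : 1 ≤ k := by
    by_contra h
    interval_cases k <;> omega
  have ha2pos : 0 < a₂ := by omega
  have hqne2 : q ≠ 2 := by
    rintro rfl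
    rw [Nat.odd_iff] at hqodd
    omega
  have hq3 : 3 ≤ q := by
    have h2 := hq.two_le
    have h3 := Nat.odd_iff.mp hqodd
    omega
  -- a₂ is odd
  have ha2odd : Odd a₂ := by
    rcases Nat.even_or_odd a₂ with he | ho
    · exfalso; rcases he with ⟨t, ht⟩; omega
    · exact ho
  -- every prime dividing a₂ is q
  have hdvd : ∀ {d : ℕ}, Nat.Prime d → d ∣ a₂ → d = q := by
    intro d hd hda2
    have : d ∈ (2 ^ k * a₂).primeFactors := by
      rw [Nat.mem_primeFactors]
      exact ⟨hd, hda2.mul_left _, by positivity⟩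
    rw [hprimes] at this
    simp only [Finset.mem_insert, Finset.mem_singleton] at this
    rcases this with rfl | rfl
    · exfalso
      exact (Nat.not_even_iff_odd.mpr ha2odd) (even_iff_two_dvd.mpr hda2)
    · rfl
  obtain hm := Nat.eq_prime_pow_of_unique_prime_dvd (n := a₂) (p := q)
    (by omega) hdvd
  set m := a₂.primeFactorsList.length with hmdef
  -- a₂ = q ^ m, with q ^ m + 1 = 2 ^ (k+1)
  have hkey : q ^ m + 1 = 2 ^ (k + 1) := by
    rw [← hm, pow_succ]; omega
  have hZ : ((q : ℤ) ^ m + 1) = 2 ^ (k + 1) := by exact_mod_cast hkey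
  have hm1 : 1 ≤ m := by
    by_contra h
    have : m = 0 := by omega
    rw [this, pow_zero] at hm; omega
  -- m is odd
  have hmodd : Odd m := by
    rcases Nat.even_or_odd m with ⟨t, ht⟩ | ho
    · exfalso
      have h4 : (4 : ℤ) ∣ (q : ℤ) ^ 2 - 1 := by
        have h2a : (2 : ℤ) ∣ (q : ℤ) - 1 := by
          rcases hqodd with ⟨r, hr⟩
          exact ⟨r, by push_cast [hr]; ring⟩
        have h2b : (2 : ℤ) ∣ (q : ℤ) + 1 := by
          rcases hqodd with ⟨r, hr⟩
          exact ⟨r + 1, by push_cast [hr]; ring⟩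
        have h44 : (4 : ℤ) = 2 * 2 := by norm_num
        rw [h44]
        have := mul_dvd_mul h2a h2b
        rwa [show ((q:ℤ) - 1) * ((q:ℤ) + 1) = (q:ℤ)^2 - 1 by ring] at this
      have hcong : ((q : ℤ) ^ m) % 4 = 1 % 4 := by
        have hsq : ((q:ℤ)^2) % 4 = 1 % 4 := Int.ModEq.symm (Int.modEq_iff_dvd.mpr (by
          simpa using h4))
        calc ((q:ℤ)^m) % 4 = (((q:ℤ)^2)^t) % 4 := by rw [← pow_mul, two_mul, ht]
          _ = (1^t : ℤ) % 4 := (Int.ModEq.pow t hsq)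
          _ = 1 % 4 := by norm_num
      have hzero : ((2:ℤ)^(k+1)) % 4 = 0 := by
        apply Int.emod_eq_zero_of_dvd
        have h44 : (4 : ℤ) = 2 ^ 2 := by norm_num
        rw [h44]
        exact pow_dvd_pow 2 (by omega)
      omega
    · exact ho
  -- q + 1 divides 2^(k+1)
  have hdvd2 : (q + 1) ∣ 2 ^ (k + 1) := by
    have hd : ((q : ℤ) + 1) ∣ (q : ℤ) ^ m + 1 := by
      have := sub_dvd_pow_sub_pow (q : ℤ) (-1) m
      rwa [hmodd.neg_one_pow, sub_neg_eq_add, sub_neg_eq_add] at this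
    have : ((q : ℤ) + 1) ∣ (2 : ℤ) ^ (k + 1) := hZ ▸ hd
    exact_mod_cast this
  obtain ⟨a, han, ha⟩ := (Nat.dvd_prime_pow Nat.prime_two).mp hdvd2
  have haZ : ((q:ℤ) + 1) = 2 ^ a := by exact_mod_cast ha
  have ha2' : 2 ≤ a := by
    by_contra h
    interval_cases a <;> omega
  -- claim a = k + 1
  have haeq : a = k + 1 := by
    by_contra hne
    have hlt : a + 1 ≤ k + 1 := by omega
    -- 2^(a+1) ∣ q^m + 1
    have hd1 : ((2:ℤ) ^ (a+1)) ∣ (q : ℤ) ^ m + 1 := by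
      rw [hZ]
      exact pow_dvd_pow 2 hlt
    -- 2^(a+1) ∣ q^2 - 1
    have hd2 : ((2:ℤ) ^ (a+1)) ∣ (q : ℤ) ^ 2 - 1 := by
      have h2a : ((2:ℤ)^a) ∣ (q : ℤ) + 1 := haZ ▸ dvd_rfl
      have h2b : (2 : ℤ) ∣ (q : ℤ) - 1 := by
        rcases hqodd with ⟨r, hr⟩
        exact ⟨r, by push_cast [hr]; ring⟩
      have := mul_dvd_mul h2a h2b
      rwa [show ((q:ℤ) + 1) * ((q:ℤ) - 1) = (q:ℤ)^2 - 1 by ring,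
        ← pow_succ] at this
    -- hence 2^(a+1) ∣ q + 1 = 2^a, contradiction
    obtain ⟨s, hs⟩ := hmodd
    have hqm : ((q:ℤ)^m) % (2^(a+1)) = ((q:ℤ)) % (2^(a+1)) := by
      have hsq : ((q:ℤ)^2) % (2^(a+1)) = 1 % (2^(a+1)) :=
        Int.ModEq.symm (Int.modEq_iff_dvd.mpr (by simpa using hd2))
      calc ((q:ℤ)^m) % (2^(a+1)) = (((q:ℤ)^2)^s * (q:ℤ)) % (2^(a+1)) := by
            rw [← pow_mul, ← pow_succ, hs]
        _ = ((1:ℤ)^s * (q:ℤ)) % (2^(a+1)) :=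
            Int.ModEq.mul_right _ (Int.ModEq.pow s hsq)
        _ = ((q:ℤ)) % (2^(a+1)) := by norm_num
    have hd3 : ((2:ℤ) ^ (a+1)) ∣ (q : ℤ) + 1 := by
      have hme : ((q:ℤ) + 1) ≡ ((q:ℤ)^m + 1) [ZMOD 2^(a+1)] :=
        Int.ModEq.add_right 1 (Int.ModEq.symm hqm)
      have h0 : ((q:ℤ)^m + 1) ≡ 0 [ZMOD 2^(a+1)] :=
        (Int.modEq_zero_iff_dvd).mpr hd1
      exact (Int.modEq_zero_iff_dvd).mp (hme.trans h0)
    have hle : ((2:ℤ) ^ (a+1)) ∣ (2:ℤ) ^ a := haZ ▸ hd3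
    have := Int.le_of_dvd (by positivity) hle
    have h2lt : (2:ℤ)^a < (2:ℤ)^(a+1) := by
      apply pow_lt_pow_right₀ (by norm_num) (by omega)
    omega
  -- so q + 1 = 2^(k+1) = q^m + 1, hence m = 1
  rw [haeq] at ha
  have hmeq : m = 1 := by
    have : q ^ m = q ^ 1 := by
      rw [pow_one]; omega
    exact Nat.pow_right_injective hq.two_le this
  rw [hmeq, pow_one] at hm hkey
  refine ⟨k, hk1, rfl, by omega, ?_⟩
  have : 2 ^ (k + 1) - 1 = q := by omega
  rw [this]
  exact hq
end

section
/- Suppose (2, a_1, a_2) is an arithmetic progression of positive integers with 2 < a_1 < a_2, gcd(2, a_1 - 2) = 1, and the set of prime divisors of 2·a_1·a_2 equals {2, q} for some odd prime q. Then either (a_1, a_2) = (9, 16) with q = 3, or a_1 = q is a Fermat prime with q = 2^α + 1 and a_2 = 2^{α+1} for some α ≥ 1. -/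
/-- If `(2, a₁, a₂)` is an arithmetic progression with `2 < a₁ < a₂`, primitive,
involving exactly the primes `2` and `q` (`q` odd), then either
`(a₁, a₂) = (9, 16)` with `q = 3`, or `a₁ = q = 2^α + 1` is a Fermat prime and
`a₂ = 2^(α+1)`. -/
theorem ap_two_fermat (a₁ a₂ q : ℕ) (h1 : 2 < a₁) (h2 : a₁ < a₂)
    (hap : 2 + a₂ = 2 * a₁) (hprim : Nat.Coprime 2 (a₁ - 2))
    (hq : q.Prime) (hqodd : Odd q)
    (hprimes : (2 * a₁ * a₂).primeFactors = {2, q}) :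
    (a₁ = 9 ∧ a₂ = 16 ∧ q = 3) ∨
      (∃ α : ℕ, 1 ≤ α ∧ a₁ = q ∧ q = 2 ^ α + 1 ∧ a₂ = 2 ^ (α + 1)) := by
  have ha2 : a₂ = 2 * (a₁ - 1) := by omega
  have hN : 2 * a₁ * a₂ ≠ 0 := by
    have : a₂ ≠ 0 := by omega
    positivity
  have hq2 : 2 ≤ q := hq.two_le
  have hodd : ¬ (2 ∣ a₁) := by
    rintro ⟨c, hc⟩
    have h2d : (2:ℕ) ∣ a₁ - 2 := by omega
    have := Nat.eq_one_of_dvd_coprimes hprim dvd_rfl h2d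
    omega
  have hmem : ∀ p : ℕ, p.Prime → p ∣ 2 * a₁ * a₂ → p = 2 ∨ p = q := by
    intro p hp hd
    have : p ∈ (2 * a₁ * a₂).primeFactors := Nat.mem_primeFactors.2 ⟨hp, hd, hN⟩
    rw [hprimes] at this
    simpa using this
  -- a₁ = q ^ m
  have ha1 : a₁ = q ^ a₁.primeFactorsList.length := by
    apply Nat.eq_prime_pow_of_unique_prime_dvd (by omega)
    intro d hd hdvd
    rcases hmem d hd (hdvd.trans ⟨2 * a₂, by ring⟩) with h | h
    · exact absurd (h ▸ hdvd) hodd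
    · exact h
  set m := a₁.primeFactorsList.length with hm
  have hm1 : 1 ≤ m := by
    rcases Nat.eq_zero_or_pos m with h | h
    · rw [h, pow_zero] at ha1; omega
    · exact h
  have hqd : q ∣ a₁ := by
    rw [ha1]; exact dvd_pow_self q (by omega)
  -- a₁ - 1 = 2 ^ β
  have hb : a₁ - 1 = 2 ^ (a₁ - 1).primeFactorsList.length := by
    apply Nat.eq_prime_pow_of_unique_prime_dvd (by omega)
    intro d hd hdvd
    have hda2 : d ∣ a₂ := ha2 ▸ hdvd.mul_left 2
    rcases hmem d hd (hda2.mul_left _) with h | h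
    · exact h
    · exfalso
      have h1' : q ∣ a₁ - (a₁ - 1) := Nat.dvd_sub hqd (h ▸ hdvd)
      have : a₁ - (a₁ - 1) = 1 := by omega
      rw [this] at h1'
      exact absurd (Nat.le_of_dvd one_pos h1') (by omega)
  set β := (a₁ - 1).primeFactorsList.length with hβ
  have hβ1 : 1 ≤ β := by
    rcases Nat.eq_zero_or_pos β with h | h
    · rw [h, pow_zero] at hb; omega
    · exact h
  have key : q ^ m = 2 ^ β + 1 := by
    rw [← ha1, ← hb]; omega
  -- split on m
  rcases eq_or_lt_of_le hm1 with hm' | hm2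
  · -- m = 1 : Fermat prime case
    right
    refine ⟨β, hβ1, ?_, ?_, ?_⟩
    · rw [ha1, ← hm', pow_one]
    · rw [← hm', pow_one] at key; omega
    · rw [ha2, hb, pow_succ]; ring
  · -- m ≥ 2
    left
    -- case on parity of m
    rcases Nat.even_or_odd m with ⟨k, hk⟩ | hmo
    · -- m = 2k, q^k-1 and q^k+1 both powers of 2
      have hk1 : 1 ≤ k := by omega
      have hqk : 3 ≤ q ^ k := by
        calc 3 ≤ q := by rcases hqodd with ⟨t, ht⟩; omega
        _ = q ^ 1 := (pow_one q).symm
        _ ≤ q ^ k := Nat.pow_le_pow_right (by omega) hk1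
      have key' : q ^ k * q ^ k = 2 ^ β + 1 := by
        rw [hk, pow_add] at key; exact key
      have hfac : (q ^ k - 1) * (q ^ k + 1) = 2 ^ β := by
        have haux : (q ^ k - 1) * (q ^ k + 1) + 1 = q ^ k * q ^ k := by
          cases' Nat.exists_eq_add_of_le (show 1 ≤ q ^ k by omega) with y hy
          rw [hy]; simp; ring
        omega
      have hd1 : (q ^ k - 1) ∣ 2 ^ β := ⟨_, hfac.symm⟩
      have hd2 : (q ^ k + 1) ∣ 2 ^ β := Dvd.intro_left _ hfac
      obtain ⟨s, hs, hs'⟩ := (Nat.dvd_prime_pow Nat.prime_two).1 hd1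
      obtain ⟨t, ht, ht'⟩ := (Nat.dvd_prime_pow Nat.prime_two).1 hd2
      -- 2^t = 2^s + 2
      have hst : 2 ^ t = 2 ^ s + 2 := by omega
      have hs1 : s = 1 := by
        by_contra hs1
        have hs2 : 2 ≤ s := by
          rcases Nat.eq_zero_or_pos s with h | h
          · rw [h] at hs'; omega
          · omega
        have ht2 : 2 ≤ t := by
          have : 2 ^ s < 2 ^ t := by omega
          have := (Nat.pow_lt_pow_iff_right (a := 2) one_lt_two).1 this
          omega
        have d4 : (4:ℕ) ∣ 2 ^ s := by
          have : (2:ℕ)^2 ∣ 2 ^ s := pow_dvd_pow 2 hs2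
          simpa using this
        have d4' : (4:ℕ) ∣ 2 ^ t := by
          have : (2:ℕ)^2 ∣ 2 ^ t := pow_dvd_pow 2 ht2
          simpa using this
        omega
      have hq3 : q ^ k = 3 := by
        rw [hs1] at hs'; norm_num at hs'; omega
      have hqe : q = 3 ∧ k = 1 := by
        have hqle : q ≤ 3 := by
          calc q = q ^ 1 := (pow_one q).symm
          _ ≤ q ^ k := Nat.pow_le_pow_right (by omega) hk1
          _ = 3 := hq3
        have hq3' : q = 3 := by
          rcases hqodd with ⟨u, hu⟩; omega
        constructor
        · exact hq3'
        · rw [hq3'] at hq3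
          rcases Nat.lt_or_ge k 2 with h | h
          · omega
          · exfalso
            have : 3 ^ 2 ≤ 3 ^ k := Nat.pow_le_pow_right (by omega) h
            omega
      have ha19 : a₁ = 9 := by
        rw [ha1, hk, hqe.1, hqe.2]; norm_num
      refine ⟨ha19, by omega, hqe.1⟩
    · -- m odd ≥ 3: contradiction via geometric sum
      exfalso
      obtain ⟨j, hj⟩ := hmo
      have hgeom : (q - 1) * ∑ i ∈ Finset.range m, q ^ i = q ^ m - 1 := by
        have := mul_geom_sum (x := (q:ℤ)) m
        have hc : ((q:ℤ) - 1) * ∑ i ∈ Finset.range m, (q:ℤ) ^ i = (q:ℤ) ^ m - 1 := by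
          linarith [this]
        have h1 : 1 ≤ q ^ m := Nat.one_le_pow _ _ (by omega)
        have hq1 : 1 ≤ q := by omega
        zify [hq1, h1]
        push_cast at hc ⊢
        linarith [hc]
      have hSodd : ¬ (2 ∣ ∑ i ∈ Finset.range m, q ^ i) := by
        intro hdvd
        have hmod : (∑ i ∈ Finset.range m, q ^ i) % 2 = m % 2 := by
          rw [Finset.sum_nat_mod]
          have : ∀ i ∈ Finset.range m, q ^ i % 2 = 1 := by
            intro i _
            exact Nat.odd_iff.1 (hqodd.pow)
          rw [Finset.sum_congr rfl this]
          simp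
        omega
      have hSd : (∑ i ∈ Finset.range m, q ^ i) ∣ 2 ^ β := by
        have h2 : q ^ m - 1 = 2 ^ β := by omega
        rw [← h2]
        exact Dvd.intro_left _ hgeom
      obtain ⟨s, hs, hs'⟩ := (Nat.dvd_prime_pow Nat.prime_two).1 hSd
      have hS3 : 1 + q ≤ ∑ i ∈ Finset.range m, q ^ i := by
        have h2m : 2 ≤ m := hm2
        calc 1 + q = ∑ i ∈ Finset.range 2, q ^ i := by simp [Finset.sum_range_succ]
        _ ≤ ∑ i ∈ Finset.range m, q ^ i := by
            apply Finset.sum_le_sum_of_subset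
            exact Finset.range_subset_range.2 h2m
      rcases Nat.eq_zero_or_pos s with h | h
      · rw [h, pow_zero] at hs'; omega
      · have : (2:ℕ) ∣ 2 ^ s := dvd_pow_self 2 (by omega)
        rw [← hs'] at this
        exact hSodd this
end

section
/- There is no primitive three-term arithmetic progression (a_0, a_1, a_2) of positive integers with a_0 ≥ 3 and a_0 < a_1 < a_2 whose terms involve at most two distinct primes in total. -/
/-- There is no primitive 3-term arithmetic progression of positive integers
with first term at least `3` involving at most two primes. -/
theorem no_ap3_first_term_ge_three (a₀ d : ℕ) (ha : 3 ≤ a₀) (hd : 1 ≤ d)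
    (hprim : Nat.Coprime a₀ d)
    (hprimes : (a₀ * (a₀ + d) * (a₀ + 2 * d)).primeFactors.card ≤ 2) :
    False := by
  set b := a₀ + d with hb
  set c := a₀ + 2 * d with hc
  have ha0 : a₀ ≠ 0 := by omega
  have hb0 : b ≠ 0 := by omega
  have hc0 : c ≠ 0 := by omega
  -- coprimalities
  have hab : Nat.Coprime a₀ b := by
    simpa [hb] using (Nat.coprime_add_self_right).mpr hprim
  have hbd : Nat.Coprime b d := by
    simpa [hb] using (Nat.coprime_add_self_left).mpr hprim
  have hbc : Nat.Coprime b c := by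
    have : c = b + d := by omega
    rw [this, Nat.add_comm]
    exact (Nat.coprime_add_self_right).mpr hbd
  -- splitting the prime factors
  have hS : (a₀ * b * c).primeFactors
      = a₀.primeFactors ∪ b.primeFactors ∪ c.primeFactors := by
    rw [Nat.primeFactors_mul (mul_ne_zero ha0 hb0) hc0, Nat.primeFactors_mul ha0 hb0]
  have hdisjAB : Disjoint a₀.primeFactors b.primeFactors :=
    hab.disjoint_primeFactors
  have hdisjBC : Disjoint b.primeFactors c.primeFactors :=
    hbc.disjoint_primeFactors
  have hBne : b.primeFactors.Nonempty := Nat.nonempty_primeFactors.mpr (by omega)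
  have hAne : a₀.primeFactors.Nonempty := Nat.nonempty_primeFactors.mpr (by omega)
  have hSAB : (a₀ * b * c).primeFactors = a₀.primeFactors ∪ b.primeFactors := by
    refine (Finset.eq_of_subset_of_card_le ?_ ?_).symm
    · rw [hS]; exact Finset.subset_union_left
    · have h1 : 1 ≤ a₀.primeFactors.card := Finset.card_pos.mpr hAne
      have h2 : 1 ≤ b.primeFactors.card := Finset.card_pos.mpr hBne
      have h3 : (a₀.primeFactors ∪ b.primeFactors).card
          = a₀.primeFactors.card + b.primeFactors.card :=
        Finset.card_union_of_disjoint hdisjAB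
      omega
  -- every prime dividing c divides a₀
  have hCA : ∀ q : ℕ, q.Prime → q ∣ c → q ∣ a₀ := by
    intro q hq hqc
    have hqS : q ∈ (a₀ * b * c).primeFactors := by
      rw [hS]
      exact Finset.mem_union_right _ (Nat.mem_primeFactors.mpr ⟨hq, hqc, hc0⟩)
    rw [hSAB] at hqS
    have hqnB : q ∉ b.primeFactors :=
      Finset.disjoint_right.mp hdisjBC (Nat.mem_primeFactors.mpr ⟨hq, hqc, hc0⟩)
    rcases Finset.mem_union.mp hqS with h | h
    · exact (Nat.mem_primeFactors.mp h).2.1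
    · exact absurd h hqnB
  -- a prime dividing c must be 2, since gcd(a₀, c) ∣ 2d and is coprime to d
  have hp2 : ∀ q : ℕ, q.Prime → q ∣ c → q = 2 := by
    intro q hq hqc
    have hqa : q ∣ a₀ := hCA q hq hqc
    have hq2d : q ∣ 2 * d := by
      have := Nat.dvd_sub hqc hqa
      have hcsub : c - a₀ = 2 * d := by omega
      rwa [hcsub] at this
    have hqd : Nat.Coprime q d := Nat.Coprime.coprime_dvd_left hqa hprim
    have hq2 : q ∣ 2 := (Nat.Coprime.dvd_of_dvd_mul_right hqd) hq2d
    exact (Nat.prime_dvd_prime_iff_eq hq Nat.prime_two).mp hq2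
  -- 2 divides a₀ and c
  have h2c : (2 : ℕ) ∣ c := by
    have hp := Nat.minFac_prime (show c ≠ 1 by omega)
    have := hp2 c.minFac hp (Nat.minFac_dvd c)
    rw [← this]; exact Nat.minFac_dvd c
  have h2a : (2 : ℕ) ∣ a₀ := hCA 2 Nat.prime_two h2c
  have hdodd : ¬ (2 : ℕ) ∣ d := by
    intro h2d
    have := Nat.eq_one_of_dvd_coprimes hprim h2a h2d
    omega
  -- no odd prime divides a₀
  have hnoodd : ∀ q : ℕ, Nat.Prime q → q ∣ a₀ → Odd q → False := by
    intro q hq hqa hqodd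
    have hq2 : q ≠ 2 := by
      rintro rfl
      exact (by decide : ¬ Odd 2) hqodd
    have hsub : {2, q} ⊆ a₀.primeFactors := by
      intro x hx
      rcases Finset.mem_insert.mp hx with rfl | hx
      · exact Nat.mem_primeFactors.mpr ⟨Nat.prime_two, h2a, ha0⟩
      · rw [Finset.mem_singleton] at hx
        subst hx
        exact Nat.mem_primeFactors.mpr ⟨hq, hqa, ha0⟩
    have hA2 : 2 ≤ a₀.primeFactors.card := by
      calc 2 = ({2, q} : Finset ℕ).card := by
              rw [Finset.card_insert_of_notMem (by simpa using hq2.symm)]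
              simp
        _ ≤ a₀.primeFactors.card := Finset.card_le_card hsub
    have hunion : (a₀.primeFactors ∪ b.primeFactors).card
        = a₀.primeFactors.card + b.primeFactors.card :=
      Finset.card_union_of_disjoint hdisjAB
    have hsub2 : a₀.primeFactors ∪ b.primeFactors ⊆ (a₀ * b * c).primeFactors := by
      rw [hS]; exact Finset.subset_union_left
    have := Finset.card_le_card hsub2
    have hB1 : 1 ≤ b.primeFactors.card := Finset.card_pos.mpr hBne
    omega
  -- hence 4 ∣ a₀ and 4 ∣ c
  have h4a : (4 : ℕ) ∣ a₀ := by
    rcases Nat.four_dvd_or_exists_odd_prime_and_dvd_of_two_lt (show 2 < a₀ by omega) with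
      h | ⟨p, hp, hpa, hpodd⟩
    · exact h
    · exact absurd hpodd (fun h' => hnoodd p hp hpa h')
  have h4c : (4 : ℕ) ∣ c := by
    rcases Nat.four_dvd_or_exists_odd_prime_and_dvd_of_two_lt (show 2 < c by omega) with
      h | ⟨p, hp, hpc, hpodd⟩
    · exact h
    · exact (hnoodd p hp (hCA p hp hpc) hpodd).elim
  -- but then 2 ∣ d, contradiction
  have : (4 : ℕ) ∣ 2 * d := by
    have := Nat.dvd_sub h4c h4a
    have hcsub : c - a₀ = 2 * d := by omega
    rwa [hcsub] at this
  exact hdodd (by omega)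
end

section
/- For every positive integer n and every finite abelian group C, the group G = G_n × C, where G_n = ⟨a, b | a^{2^n} = b^3 = 1, b^a = b^{-1}⟩, has conjugacy class size set cs(G) = {1, 2, 3}, and Z(G) = ⟨a^2⟩ × C. -/
section aux
variable {H C : Type*} [Group H] [Group C]

lemma isConj_prod_iff {p q : H × C} :
    IsConj p q ↔ IsConj p.1 q.1 ∧ IsConj p.2 q.2 := by
  rw [isConj_iff, isConj_iff, isConj_iff]
  constructor
  · rintro ⟨c, hc⟩
    rw [Prod.ext_iff] at hc
    exact ⟨⟨c.1, hc.1⟩, ⟨c.2, hc.2⟩⟩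
  · rintro ⟨⟨c1, h1⟩, ⟨c2, h2⟩⟩
    exact ⟨(c1, c2), Prod.ext h1 h2⟩

def conjClassProdEquiv {C : Type*} [CommGroup C] (g : H) (c : C) :
    {p : H × C // IsConj (g, c) p} ≃ {h : H // IsConj g h} where
  toFun p := ⟨p.1.1, (isConj_prod_iff.mp p.2).1⟩
  invFun h := ⟨(h.1, c), isConj_prod_iff.mpr ⟨h.2, IsConj.refl c⟩⟩
  left_inv p := Subtype.ext (Prod.ext rfl (isConj_iff_eq.mp (isConj_prod_iff.mp p.2).2))
  right_inv h := rfl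

lemma center_prod' {C : Type*} [CommGroup C] :
    Subgroup.center (H × C) = (Subgroup.center H).prod ⊤ := by
  ext ⟨h, c⟩
  simp only [Subgroup.mem_prod, Subgroup.mem_top, and_true]
  constructor
  · intro hz
    rw [Subgroup.mem_center_iff] at hz ⊢
    intro g
    exact (Prod.ext_iff.mp (hz (g, 1))).1
  · intro hh
    rw [Subgroup.mem_center_iff] at hh ⊢
    rintro ⟨g, d⟩
    exact Prod.ext (hh g) (mul_comm d c)

end aux

/-- The set of conjugacy class sizes of a group. -/
def csSet (G : Type*) [Group G] : Set ℕ :=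
  {n | ∃ g : G, n = Nat.card {h : G // IsConj g h}}

/-- Let `G_n = ⟨a, b ∣ a^{2^n} = b^3 = 1, b^a = b⁻¹⟩` (characterized as a group of
order `3·2^n` generated by such `a, b`) and `C` a finite abelian group. Then
`cs(G_n × C) = {1, 2, 3}` and `Z(G_n × C) = ⟨a²⟩ × C`. -/
theorem cs_Gn_times_abelian (n : ℕ) (hn : 1 ≤ n)
    (H C : Type*) [Group H] [Finite H] [CommGroup C] [Finite C]
    (a b : H) (ha : a ^ (2 ^ n) = 1) (hb : b ^ 3 = 1) (hba : a⁻¹ * b * a = b⁻¹)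
    (hgen : Subgroup.closure ({a, b} : Set H) = ⊤)
    (hcard : Nat.card H = 3 * 2 ^ n) :
    csSet (H × C) = {1, 2, 3} ∧
      Subgroup.center (H × C) = (Subgroup.closure ({a ^ 2} : Set H)).prod ⊤ := by
  haveI : Fact (Nat.Prime 3) := ⟨by norm_num⟩
  -- b ≠ 1
  have hbne : b ≠ 1 := by
    intro h1
    have hle : Subgroup.closure ({a, b} : Set H) ≤ Subgroup.zpowers a := by
      apply (Subgroup.closure_le _).mpr
      intro x hx
      rcases hx with h | h
      · rw [h]; exact Subgroup.mem_zpowers a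
      · rw [Set.mem_singleton_iff] at h; rw [h, h1]; exact one_mem _
    rw [hgen] at hle
    have htop : Subgroup.zpowers a = ⊤ := le_antisymm le_top hle
    have h2 : Nat.card H = orderOf a := by
      rw [← Nat.card_zpowers, htop, Subgroup.card_top]
    have h3 : orderOf a ∣ 2 ^ n := orderOf_dvd_of_pow_eq_one ha
    rw [← h2, hcard] at h3
    have hp : 0 < 2 ^ n := by positivity
    have := Nat.le_of_dvd hp h3
    omega
  have hob : orderOf b = 3 := orderOf_eq_prime hb hbne
  -- basic relations
  have hba2 : b * a = a * b⁻¹ := by rw [← hba]; group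
  have hb' : a * b⁻¹ * a⁻¹ = b := by rw [← hba]; group
  have hab : a * b * a⁻¹ = b⁻¹ := by
    have h := congrArg Inv.inv hb'
    rw [show (a * b⁻¹ * a⁻¹)⁻¹ = a * b * a⁻¹ by group] at h
    exact h
  have hab2 : b⁻¹ * a = a * b := by rw [← hab]; group
  have hbb : b * b = b⁻¹ := by
    have h3 : b * b * b = 1 := by rw [show b * b * b = b ^ 3 by rw [pow_succ, pow_two], hb]
    exact eq_inv_of_mul_eq_one_left h3
  have hinv : b⁻¹ * b⁻¹ = b := by nth_rewrite 2 [← hbb]; rw [← mul_assoc, inv_mul_cancel, one_mul]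
  have hc2 : Commute (a ^ 2) b := by
    show a ^ 2 * b = b * a ^ 2
    rw [pow_two]
    calc a * a * b = a * (b⁻¹ * a) := by rw [mul_assoc, ← hab2]
    _ = b * (a * a) := by rw [← mul_assoc, ← hba2, mul_assoc]
  -- conjugation by a on powers of b
  have hkey : ∀ k : ℤ, a * b ^ k * a⁻¹ = b ^ (-k) := by
    intro k
    rw [← conj_zpow, hab, zpow_neg, inv_zpow]
  have hkey' : ∀ k : ℤ, a⁻¹ * b ^ k * a = b ^ (-k) := by
    intro k
    have h := hkey (-k)
    rw [neg_neg] at h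
    rw [← h]; group
  -- zpowers b is normal
  have hN : (Subgroup.zpowers b).Normal := by
    rw [← Subgroup.normalizer_eq_top_iff, eq_top_iff, ← hgen, Subgroup.closure_le]
    intro x hx
    rcases hx with h | h
    · rw [h, SetLike.mem_coe, Subgroup.mem_normalizer_iff]
      intro g
      constructor
      · intro hg
        obtain ⟨k, hk⟩ := Subgroup.mem_zpowers_iff.mp hg
        rw [← hk, hkey k]
        exact Subgroup.zpow_mem _ (Subgroup.mem_zpowers b) _
      · intro hg
        obtain ⟨k, hk⟩ := Subgroup.mem_zpowers_iff.mp hg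
        have hg2 : g = a⁻¹ * b ^ k * a := by rw [hk]; group
        rw [hg2, hkey' k]
        exact Subgroup.zpow_mem _ (Subgroup.mem_zpowers b) _
    · rw [Set.mem_singleton_iff] at h
      rw [h]
      exact Subgroup.le_normalizer (Subgroup.mem_zpowers b)
  haveI := hN
  -- commutators lie in zpowers b
  have hcommutator : ∀ x y : H, x * y * x⁻¹ * y⁻¹ ∈ Subgroup.zpowers b := by
    have hsurj := QuotientGroup.mk'_surjective (Subgroup.zpowers b)
    set π := QuotientGroup.mk' (Subgroup.zpowers b) with hπ
    have hmkb : π b = 1 := by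
      rw [hπ, QuotientGroup.mk'_apply, QuotientGroup.eq_one_iff]
      exact Subgroup.mem_zpowers b
    have htopQ : (⊤ : Subgroup (H ⧸ Subgroup.zpowers b)) ≤ Subgroup.zpowers (π a) := by
      have h1 : (⊤ : Subgroup (H ⧸ Subgroup.zpowers b)) =
          Subgroup.map π (Subgroup.closure {a, b}) := by
        rw [hgen, Subgroup.map_top_of_surjective π hsurj]
      rw [h1, MonoidHom.map_closure, Set.image_pair, Subgroup.closure_le]
      intro x hx
      rcases hx with h | h
      · rw [h]; exact Subgroup.mem_zpowers (π a)
      · rw [Set.mem_singleton_iff] at h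
        rw [h, hmkb]; exact one_mem _
    have hcommQ : ∀ u v : H ⧸ Subgroup.zpowers b, u * v = v * u := by
      intro u v
      obtain ⟨i, hi⟩ := Subgroup.mem_zpowers_iff.mp (htopQ (Subgroup.mem_top u))
      obtain ⟨j, hj⟩ := Subgroup.mem_zpowers_iff.mp (htopQ (Subgroup.mem_top v))
      rw [← hi, ← hj, ← zpow_add, ← zpow_add, add_comm]
    intro x y
    rw [← QuotientGroup.eq_one_iff]
    simp only [QuotientGroup.mk_mul, QuotientGroup.mk_inv]
    rw [hcommQ (x : H ⧸ Subgroup.zpowers b) (y : H ⧸ Subgroup.zpowers b)]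
    group
  have hconj : ∀ g x : H, ∃ t : ℤ, x * g * x⁻¹ = b ^ t * g := by
    intro g x
    obtain ⟨t, ht⟩ := Subgroup.mem_zpowers_iff.mp (hcommutator x g)
    exact ⟨t, by rw [ht]; group⟩
  -- powers of b
  have hbpow : ∀ t : ℤ, b ^ t = 1 ∨ b ^ t = b ∨ b ^ t = b * b := by
    intro t
    have h3 : b ^ (3 : ℤ) = 1 := by
      rw [show (3 : ℤ) = ((3 : ℕ) : ℤ) by norm_num, zpow_natCast, hb]
    have heq : b ^ t = b ^ (t % 3) := by
      conv_lhs => rw [← Int.mul_ediv_add_emod t 3]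
      rw [zpow_add, zpow_mul, h3, one_zpow, one_mul]
    have ht : t % 3 = 0 ∨ t % 3 = 1 ∨ t % 3 = 2 := by omega
    rcases ht with h | h | h <;> rw [heq, h]
    · exact Or.inl (zpow_zero b)
    · exact Or.inr (Or.inl (zpow_one b))
    · refine Or.inr (Or.inr ?_)
      rw [show (2 : ℤ) = 1 + 1 by norm_num, zpow_add, zpow_one]
  -- every conjugacy class is contained in a 3-element set
  have hclass_sub : ∀ g h : H, IsConj g h → h ∈ ({g, b * g, b * b * g} : Set H) := by
    intro g h hc
    obtain ⟨x, hx⟩ := isConj_iff.mp hc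
    obtain ⟨t, ht⟩ := hconj g x
    rw [← hx, ht]
    rcases hbpow t with h1 | h1 | h1 <;> rw [h1]
    · rw [one_mul]; exact Set.mem_insert _ _
    · exact Set.mem_insert_of_mem _ (Set.mem_insert _ _)
    · exact Set.mem_insert_of_mem _ (Set.mem_insert_of_mem _ rfl)
  -- the class of 1
  have hclass1 : {h : H | IsConj (1 : H) h} = {1} := by
    ext h
    simp [isConj_one_right, eq_comm]
  -- the class of b
  have hclassb : {h : H | IsConj b h} = {b, b * b} := by
    apply Set.Subset.antisymm
    · intro h hh
      rcases hclass_sub b h hh with h1 | h1 | h1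
      · rw [h1]; exact Set.mem_insert _ _
      · rw [h1]; exact Set.mem_insert_of_mem _ rfl
      · exfalso
        have hone : h = 1 := by
          rw [h1, show b * b * b = b ^ 3 by rw [pow_succ, pow_two], hb]
        rw [Set.mem_setOf_eq, hone] at hh
        exact hbne (isConj_one_left.mp hh)
    · intro h hh
      rcases hh with h1 | h1
      · rw [h1]; exact IsConj.refl b
      · rw [Set.mem_singleton_iff] at h1
        rw [h1]
        rw [Set.mem_setOf_eq, isConj_iff]
        exact ⟨a⁻¹, by rw [inv_inv, hba, ← hbb]⟩
  -- the class of a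
  have hclassa : {h : H | IsConj a h} = {a, b * a, b * b * a} := by
    apply Set.Subset.antisymm
    · intro h hh
      exact hclass_sub a h hh
    · intro h hh
      rcases hh with h1 | h1 | h1
      · rw [h1]; exact IsConj.refl a
      · rw [h1, Set.mem_setOf_eq, isConj_iff]
        refine ⟨b⁻¹, ?_⟩
        rw [inv_inv]
        calc b⁻¹ * a * b = a * b * b := by rw [hab2]
        _ = a * b⁻¹ := by rw [mul_assoc, hbb]
        _ = b * a := by rw [← hba2]
      · rw [Set.mem_singleton_iff] at h1
        rw [h1, Set.mem_setOf_eq, isConj_iff]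
        refine ⟨b, ?_⟩
        calc b * a * b⁻¹ = a * b⁻¹ * b⁻¹ := by rw [hba2]
        _ = a * b := by rw [mul_assoc, hinv]
        _ = b⁻¹ * a := by rw [← hab2]
        _ = b * b * a := by rw [← hbb]
  -- distinctness facts
  have hbbne : b * b ≠ 1 := by
    intro h
    rw [hbb] at h
    exact hbne (inv_eq_one.mp h)
  have hd1 : b ≠ b * b := by
    intro h
    have h' : b * 1 = b * b := by rw [mul_one]; exact h
    exact hbne (mul_left_cancel h').symm
  have ha1 : a ≠ b * a := by
    intro h
    have h' : (1 : H) * a = b * a := by rw [one_mul]; exact h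
    exact hbne (mul_right_cancel h').symm
  have ha2 : a ≠ b * b * a := by
    intro h
    have h' : (1 : H) * a = b * b * a := by rw [one_mul]; exact h
    exact hbbne (mul_right_cancel h').symm
  have ha3 : b * a ≠ b * b * a := by
    intro h
    exact hd1 (mul_right_cancel h)
  have hnb : ({b, b * b} : Set H).ncard = 2 := Set.ncard_pair hd1
  have hna : ({a, b * a, b * b * a} : Set H).ncard = 3 := by
    have hnotmem : a ∉ ({b * a, b * b * a} : Set H) := by
      simp only [Set.mem_insert_iff, Set.mem_singleton_iff]
      push_neg
      exact ⟨ha1, ha2⟩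
    rw [Set.ncard_insert_of_notMem hnotmem, Set.ncard_pair ha3]
  have hcardclass : ∀ (g : H) (c : C),
      Nat.card {p : H × C // IsConj (g, c) p} = ({h : H | IsConj g h}).ncard := by
    intro g c
    rw [Nat.card_congr (conjClassProdEquiv g c)]
    exact Nat.card_coe_set_eq _
  -- decomposition of elements
  have hdecomp : ∀ z : H, ∃ i k : ℤ, z = b ^ i * a ^ k := by
    intro z
    have hle2 : (⊤ : Subgroup H) ≤ Subgroup.zpowers b ⊔ Subgroup.zpowers a := by
      rw [← hgen, Subgroup.closure_le]
      intro x hx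
      rcases hx with h | h
      · rw [h]; exact SetLike.mem_coe.mpr (Subgroup.mem_sup_right (Subgroup.mem_zpowers a))
      · rw [Set.mem_singleton_iff] at h; rw [h]
        exact SetLike.mem_coe.mpr (Subgroup.mem_sup_left (Subgroup.mem_zpowers b))
    have hz : z ∈ (↑(Subgroup.zpowers b ⊔ Subgroup.zpowers a) : Set H) :=
      hle2 (Subgroup.mem_top z)
    rw [Subgroup.normal_mul] at hz
    obtain ⟨x, hx, y, hy, hxy⟩ := hz
    obtain ⟨i, hi⟩ := Subgroup.mem_zpowers_iff.mp hx
    obtain ⟨k, hk⟩ := Subgroup.mem_zpowers_iff.mp hy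
    exact ⟨i, k, by rw [← hxy, ← hi, ← hk]⟩
  have hb3 : b ^ (3 : ℤ) = 1 := by
    rw [show (3 : ℤ) = ((3 : ℕ) : ℤ) by norm_num, zpow_natCast, hb]
  -- the center of H
  have hcenterH : Subgroup.center H = Subgroup.closure {a ^ 2} := by
    apply le_antisymm
    · intro z hz
      obtain ⟨i, k, rfl⟩ := hdecomp z
      have hzc := Subgroup.mem_center_iff.mp hz
      have h1 := hzc a
      have hak : Commute a (a ^ k) := (Commute.refl a).zpow_right k
      have h1' : a * b ^ i * a ^ k = b ^ i * a * a ^ k := by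
        calc a * b ^ i * a ^ k = a * (b ^ i * a ^ k) := by group
        _ = b ^ i * a ^ k * a := h1
        _ = b ^ i * (a ^ k * a) := by group
        _ = b ^ i * (a * a ^ k) := by rw [← hak.eq]
        _ = b ^ i * a * a ^ k := by group
      have h2 : a * b ^ i = b ^ i * a := mul_right_cancel h1'
      have h3 : b ^ i = b ^ (-i) := by
        calc b ^ i = a⁻¹ * (a * b ^ i) := by group
        _ = a⁻¹ * (b ^ i * a) := by rw [h2]
        _ = a⁻¹ * b ^ i * a := by group
        _ = b ^ (-i) := hkey' i
      have h4 : b ^ (i + i) = 1 := by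
        rw [zpow_add]
        nth_rewrite 2 [h3]
        rw [← zpow_add, add_neg_cancel, zpow_zero]
      have h5 : (3 : ℤ) ∣ (i + i) := by
        have := orderOf_dvd_iff_zpow_eq_one.mpr h4
        rw [hob] at this
        exact_mod_cast this
      have h6 : (3 : ℤ) ∣ i := by omega
      obtain ⟨m, rfl⟩ := h6
      have h7 : b ^ (3 * m) = 1 := by rw [zpow_mul, hb3, one_zpow]
      have h8 : b * a ^ k = a ^ k * b := by
        have h8' := hzc b
        rw [h7, one_mul] at h8'
        exact h8'
      rw [h7, one_mul]
      rcases Int.even_or_odd k with ⟨m2, rfl⟩ | ⟨m2, rfl⟩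
      · rw [Subgroup.mem_closure_singleton]
        exact ⟨m2, by rw [← zpow_natCast a 2, ← zpow_mul, Nat.cast_ofNat, two_mul]⟩
      · exfalso
        have e : a ^ (2 * m2 + 1 : ℤ) = a ^ (2 * m2 : ℤ) * a := by
          rw [zpow_add, zpow_one]
        have hcm : Commute (a ^ (2 * m2 : ℤ)) b := by
          have he2 : ((a ^ 2 : H)) ^ m2 = a ^ (2 * m2 : ℤ) := by
            rw [← zpow_natCast a 2, ← zpow_mul, Nat.cast_ofNat]
          rw [← he2]
          exact hc2.zpow_left m2
        have h8' := h8
        rw [e] at h8'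
        have h9 : b * a = a * b := by
          have hc : a ^ (2 * m2 : ℤ) * (b * a) = a ^ (2 * m2 : ℤ) * (a * b) := by
            calc a ^ (2 * m2 : ℤ) * (b * a) = (a ^ (2 * m2 : ℤ) * b) * a := by group
            _ = (b * a ^ (2 * m2 : ℤ)) * a := by rw [hcm.eq]
            _ = b * (a ^ (2 * m2 : ℤ) * a) := by group
            _ = a ^ (2 * m2 : ℤ) * a * b := h8'
            _ = a ^ (2 * m2 : ℤ) * (a * b) := by group
          exact mul_left_cancel hc
        have h10 : b⁻¹ = b := by
          calc b⁻¹ = a⁻¹ * b * a := hba.symm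
          _ = a⁻¹ * (b * a) := by group
          _ = a⁻¹ * (a * b) := by rw [h9]
          _ = b := by group
        have hb2 : b * b = 1 := by
          nth_rewrite 1 [← h10]
          exact inv_mul_cancel b
        exact hbbne hb2
    · rw [Subgroup.closure_le]
      intro x hx
      rw [Set.mem_singleton_iff] at hx
      rw [hx, SetLike.mem_coe]
      have hcent : Subgroup.closure ({a, b} : Set H) ≤ Subgroup.centralizer {a ^ 2} := by
        rw [Subgroup.closure_le]
        intro y hy
        rcases hy with h | h
        · rw [h, SetLike.mem_coe, Subgroup.mem_centralizer_iff]
          rintro w hw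
          rw [Set.mem_singleton_iff] at hw
          rw [hw]
          exact ((Commute.refl a).pow_left 2).eq
        · rw [Set.mem_singleton_iff] at h
          rw [h, SetLike.mem_coe, Subgroup.mem_centralizer_iff]
          rintro w hw
          rw [Set.mem_singleton_iff] at hw
          rw [hw]
          exact hc2.eq
      rw [hgen] at hcent
      rw [Subgroup.mem_center_iff]
      intro g
      have hg := hcent (Subgroup.mem_top g)
      rw [Subgroup.mem_centralizer_iff] at hg
      exact (hg _ rfl).symm
  refine ⟨?_, ?_⟩
  · ext m
    simp only [csSet, Set.mem_setOf_eq, Set.mem_insert_iff, Set.mem_singleton_iff]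
    constructor
    · rintro ⟨⟨g, c⟩, rfl⟩
      rw [hcardclass g c]
      have hle : ({h : H | IsConj g h}).ncard ≤ 3 := by
        have h1 := Set.ncard_le_ncard (s := {h : H | IsConj g h})
            (t := {g, b * g, b * b * g}) (fun h hh => hclass_sub g h hh) (Set.toFinite _)
        have h2 : ({g, b * g, b * b * g} : Set H).ncard ≤ 3 := by
          have i1 := Set.ncard_insert_le g ({b * g, b * b * g} : Set H)
          have i2 := Set.ncard_insert_le (b * g) ({b * b * g} : Set H)
          have i3 : ({b * b * g} : Set H).ncard = 1 := Set.ncard_singleton _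
          omega
        omega
      have hge : 1 ≤ ({h : H | IsConj g h}).ncard :=
        (Set.ncard_pos (Set.toFinite _)).mpr ⟨g, IsConj.refl g⟩
      omega
    · rintro (rfl | rfl | rfl)
      · exact ⟨((1 : H), (1 : C)), by rw [hcardclass, hclass1, Set.ncard_singleton]⟩
      · exact ⟨(b, 1), by rw [hcardclass, hclassb, hnb]⟩
      · exact ⟨(a, 1), by rw [hcardclass, hclassa, hna]⟩
  · rw [center_prod', hcenterH]
end

section
/- Let G = K ⋊ L be a finite group with K abelian normal, gcd(|K|, |L|) = 1, Z(G) < L, L/Z(G) cyclic, and G/Z(G) a Frobenius group with kernel KZ(G)/Z(G). Then cs(G) = {1, m, n} where m = |L : Z(G)| and n = |K|, and n ≡ 1 (mod m); in particular gcd(m, n) = 1. -/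
/-- The conjugate of a subgroup by a group element. -/
def conjSub {G : Type*} [Group G] (g : G) (H : Subgroup G) : Subgroup G :=
  H.map (MulAut.conj g).toMonoidHom

/-- `G` is a Frobenius group with kernel `K`: there is a proper non-trivial
complement `H` intersecting its distinct conjugates trivially, and
`K = {1} ∪ (G \ ⋃_g H^g)`. -/
def IsFrobeniusWithKernel (G : Type*) [Group G] (K : Subgroup G) : Prop :=
  ∃ H : Subgroup G, H ≠ ⊥ ∧ H ≠ ⊤ ∧
    (∀ g : G, g ∉ H → conjSub g H ⊓ H = ⊥) ∧
    (K : Set G) = {1} ∪ (Set.univ \ ⋃ g : G, (conjSub g H : Set G))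

lemma mem_conjSub {G : Type*} [Group G] {g x : G} {H : Subgroup G} :
    x ∈ conjSub g H ↔ ∃ h ∈ H, g * h * g⁻¹ = x := by
  simp [conjSub, Subgroup.mem_map, MulAut.conj_apply]

lemma frob_cent {G : Type*} [Group G] {N : Subgroup G}
    (hfrob : IsFrobeniusWithKernel G N) :
    ∀ x c : G, x ∈ N → x ≠ 1 → c * x = x * c → c ∈ N := by
  obtain ⟨H, -, -, htriv, hset⟩ := hfrob
  intro x c hx hx1 hcomm
  by_contra hc
  have hmem : ∀ y : G, y ∈ N ↔ (y = 1 ∨ y ∉ ⋃ g : G, (conjSub g H : Set G)) := by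
    intro y
    constructor
    · intro hy
      have h : y ∈ (N : Set G) := hy
      rw [hset] at h
      rcases h with h | h
      · exact Or.inl h
      · exact Or.inr h.2
    · intro hy
      have h : y ∈ ({1} : Set G) ∪ (Set.univ \ ⋃ g : G, (conjSub g H : Set G)) := by
        rcases hy with h | h
        · exact Or.inl h
        · exact Or.inr ⟨trivial, h⟩
      rw [← hset] at h
      exact h
  have hc' := hc
  rw [hmem] at hc'
  push_neg at hc'
  obtain ⟨hc1, hcU⟩ := hc'
  obtain ⟨a, ha⟩ := Set.mem_iUnion.mp hcU
  have hxU : x ∉ ⋃ g : G, (conjSub g H : Set G) := by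
    rcases (hmem x).mp hx with h | h
    · exact absurd h hx1
    · exact h
  have hxa : x ∉ (conjSub a H : Set G) := fun h => hxU (Set.mem_iUnion.mpr ⟨a, h⟩)
  obtain ⟨h, hh, hha⟩ := mem_conjSub.mp ha
  have hb : a⁻¹ * x * a ∉ H := by
    intro hbH
    apply hxa
    refine mem_conjSub.mpr ⟨a⁻¹ * x * a, hbH, by group⟩
  have key := htriv (a⁻¹ * x * a) hb
  have h2 : x * c * x⁻¹ = c := by rw [← hcomm]; group
  have hhb : h ∈ conjSub (a⁻¹ * x * a) H ⊓ H := by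
    refine ⟨mem_conjSub.mpr ⟨h, hh, ?_⟩, hh⟩
    calc (a⁻¹ * x * a) * h * (a⁻¹ * x * a)⁻¹
        = a⁻¹ * (x * (a * h * a⁻¹) * x⁻¹) * a := by group
      _ = a⁻¹ * (x * c * x⁻¹) * a := by rw [hha]
      _ = a⁻¹ * c * a := by rw [h2]
      _ = h := by rw [← hha]; group
  rw [key] at hhb
  have h1 : h = 1 := Subgroup.mem_bot.mp hhb
  apply hc1
  rw [← hha, h1]
  group

/-- Let `G = K ⋊ L` be finite with `K` abelian normal, `gcd(|K|,|L|) = 1`,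
`Z(G) < L`, `L/Z(G)` cyclic, and `G/Z(G)` Frobenius with kernel `KZ(G)/Z(G)`.
Then `cs(G) = {1, m, n}` where `m = |L : Z(G)|`, `n = |K|`, `n ≡ 1 (mod m)`,
and in particular `gcd(m, n) = 1`. -/
theorem cs_of_frobenius_structure (G : Type*) [Group G] [Finite G]
    (K L : Subgroup G) (hKn : K.Normal)
    (hKab : ∀ x ∈ K, ∀ y ∈ K, x * y = y * x)
    (hcompl : IsCompl K L)
    (hcop : Nat.Coprime (Nat.card K) (Nat.card L))
    (hZL : Subgroup.center G < L)
    (hcyc : ∃ x ∈ L, ∀ y ∈ L, ∃ k : ℤ, y * (x ^ k)⁻¹ ∈ Subgroup.center G)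
    (hfrob : IsFrobeniusWithKernel (G ⧸ Subgroup.center G)
      ((K ⊔ Subgroup.center G).map (QuotientGroup.mk' (Subgroup.center G)))) :
    csSet G = {1, (Subgroup.center G).relIndex L, Nat.card K} ∧
      Nat.card K % (Subgroup.center G).relIndex L = 1 ∧
      Nat.Coprime ((Subgroup.center G).relIndex L) (Nat.card K) := by
  classical
  haveI := hKn
  set Z := Subgroup.center G with hZdef
  obtain ⟨x₀, hx₀L, hx₀⟩ := hcyc
  -- L is abelian
  have hLab : ∀ a ∈ L, ∀ b ∈ L, a * b = b * a := by
    intro a ha b hb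
    obtain ⟨i, hi⟩ := hx₀ a ha
    obtain ⟨j, hj⟩ := hx₀ b hb
    have hzi := Subgroup.mem_center_iff.mp hi
    have hzj := Subgroup.mem_center_iff.mp hj
    have hx : x₀ ^ i * x₀ ^ j = x₀ ^ j * x₀ ^ i := by
      rw [← zpow_add, ← zpow_add, add_comm]
    calc a * b = (a * (x₀ ^ i)⁻¹) * (x₀ ^ i * (b * (x₀ ^ j)⁻¹)) * x₀ ^ j := by group
      _ = (a * (x₀ ^ i)⁻¹) * ((b * (x₀ ^ j)⁻¹) * x₀ ^ i) * x₀ ^ j := by rw [hzj (x₀ ^ i)]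
      _ = ((a * (x₀ ^ i)⁻¹) * (b * (x₀ ^ j)⁻¹)) * (x₀ ^ i * x₀ ^ j) := by group
      _ = ((b * (x₀ ^ j)⁻¹) * (a * (x₀ ^ i)⁻¹)) * (x₀ ^ j * x₀ ^ i) := by
          rw [hzi (b * (x₀ ^ j)⁻¹), hx]
      _ = (b * (x₀ ^ j)⁻¹) * ((a * (x₀ ^ i)⁻¹) * x₀ ^ j) * x₀ ^ i := by group
      _ = (b * (x₀ ^ j)⁻¹) * (x₀ ^ j * (a * (x₀ ^ i)⁻¹)) * x₀ ^ i := by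
          rw [hzi (x₀ ^ j)]
      _ = b * a := by group
  have hKLd : K ⊓ L = ⊥ := hcompl.inf_eq_bot
  have hKLt : K ⊔ L = ⊤ := hcompl.sup_eq_top
  have hZleL : Z ≤ L := hZL.le
  have hKZtriv : ∀ k ∈ K, k ∈ Z → k = 1 := by
    intro k hk hkz
    have h : k ∈ K ⊓ L := ⟨hk, hZleL hkz⟩
    rw [hKLd] at h
    exact Subgroup.mem_bot.mp h
  have hdec : ∀ g : G, ∃ k ∈ K, ∃ l ∈ L, k * l = g := by
    intro g
    have hg : g ∈ ((K ⊔ L : Subgroup G) : Set G) := by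
      rw [hKLt]; trivial
    rw [Subgroup.normal_mul] at hg
    exact Set.mem_mul.mp hg
  have hdecKZ : ∀ g ∈ K ⊔ Z, ∃ k ∈ K, ∃ z ∈ Z, k * z = g := by
    intro g hg
    have hg' : g ∈ ((K ⊔ Z : Subgroup G) : Set G) := hg
    rw [Subgroup.normal_mul] at hg'
    exact Set.mem_mul.mp hg'
  -- The key consequence of the Frobenius hypothesis
  have hkey : ∀ k ∈ K, k ≠ 1 → ∀ c : G, c * k = k * c → c ∈ K ⊔ Z := by
    intro k hk hk1 c hcomm
    have h1 : (QuotientGroup.mk' Z) k ∈ (K ⊔ Z).map (QuotientGroup.mk' Z) :=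
      ⟨k, Subgroup.mem_sup_left hk, rfl⟩
    have h2 : (QuotientGroup.mk' Z) k ≠ 1 := by
      intro h
      have hkZ : k ∈ Z := by
        rw [← QuotientGroup.ker_mk' Z]
        exact h
      exact hk1 (hKZtriv k hk hkZ)
    have h3 : (QuotientGroup.mk' Z) c * (QuotientGroup.mk' Z) k
        = (QuotientGroup.mk' Z) k * (QuotientGroup.mk' Z) c := by
      rw [← map_mul, ← map_mul, hcomm]
    have h4 := frob_cent hfrob _ _ h1 h2 h3
    obtain ⟨y, hy, hyc⟩ := h4
    have h5 : y⁻¹ * c ∈ Z := by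
      rw [← QuotientGroup.ker_mk' Z]
      show (QuotientGroup.mk' Z) (y⁻¹ * c) = 1
      rw [map_mul, map_inv, hyc]
      group
    have hcy : c = y * (y⁻¹ * c) := by group
    rw [hcy]
    exact Subgroup.mul_mem _ hy (Subgroup.mem_sup_right h5)
  have hKZinL : ∀ g ∈ K ⊔ Z, g ∈ L → g ∈ Z := by
    intro g hg hgL
    obtain ⟨k, hk, z, hz, hkz⟩ := hdecKZ g hg
    have hzL : z ∈ L := hZleL hz
    have hkL : k ∈ L := by
      have hk' : k = g * z⁻¹ := by rw [← hkz]; group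
      rw [hk']
      exact Subgroup.mul_mem _ hgL (Subgroup.inv_mem _ hzL)
    have hk1 : k = 1 := by
      have hm : k ∈ K ⊓ L := ⟨hk, hkL⟩
      rw [hKLd] at hm
      exact Subgroup.mem_bot.mp hm
    rw [← hkz, hk1, one_mul]
    exact hz
  have hcentL : ∀ g ∈ K ⊔ Z, g ∉ Z → ∀ c ∈ L, c * g = g * c → c ∈ Z := by
    intro g hg hgZ c hcL hcomm
    obtain ⟨k, hk, z, hz, hkz⟩ := hdecKZ g hg
    have hk1 : k ≠ 1 := by
      rintro rfl
      rw [one_mul] at hkz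
      exact hgZ (hkz ▸ hz)
    have hzc := Subgroup.mem_center_iff.mp hz c
    have hck : c * k = k * c := by
      have h := hcomm
      rw [← hkz] at h
      have h2 : c * k * z = k * c * z := by
        calc c * k * z = c * (k * z) := by group
          _ = k * z * c := h
          _ = k * (z * c) := by group
          _ = k * (c * z) := by rw [← hzc]
          _ = k * c * z := by group
      exact mul_right_cancel h2
    exact hKZinL c (hkey k hk hk1 c hck) hcL
  have hcentK : ∀ g : G, g ∉ K ⊔ Z → ∀ k ∈ K, k * g = g * k → k = 1 := by
    intro g hg k hk hcomm
    by_contra hk1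
    exact hg (hkey k hk hk1 g hcomm.symm)
  -- conjugacy class sizes
  have sizeZ : ∀ g ∈ Z, Nat.card {h : G // IsConj g h} = 1 := by
    intro g hg
    have hgc := Subgroup.mem_center_iff.mp hg
    haveI : Unique {h : G // IsConj g h} := by
      refine ⟨⟨⟨g, IsConj.refl g⟩⟩, ?_⟩
      rintro ⟨h, hc⟩
      obtain ⟨c, hc'⟩ := isConj_iff.mp hc
      refine Subtype.ext ?_
      show h = g
      rw [← hc']
      calc c * g * c⁻¹ = g * c * c⁻¹ := by rw [hgc c]
        _ = g := by group
    exact Nat.card_unique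
  have sizeM : ∀ g ∈ K ⊔ Z, g ∉ Z →
      Nat.card {h : G // IsConj g h} = Z.relIndex L := by
    intro g hg hgZ
    let f : (↥L ⧸ Z.subgroupOf L) → {h : G // IsConj g h} := fun q =>
      Quotient.liftOn' q
        (fun l => ⟨(l : G) * g * (l : G)⁻¹, isConj_iff.mpr ⟨l, rfl⟩⟩)
        (by
          intro a b hab
          rw [QuotientGroup.leftRel_apply, Subgroup.mem_subgroupOf] at hab
          have hz : ((a⁻¹ * b : ↥L) : G) ∈ Z := hab
          have hzc := Subgroup.mem_center_iff.mp hz g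
          refine Subtype.ext ?_
          show (a : G) * g * (a : G)⁻¹ = (b : G) * g * (b : G)⁻¹
          have hzc' : g * ((a : G)⁻¹ * (b : G)) = ((a : G)⁻¹ * (b : G)) * g := by
            simpa using hzc
          calc (a : G) * g * (a : G)⁻¹
              = (a : G) * (g * ((a : G)⁻¹ * (b : G))) * (b : G)⁻¹ := by group
            _ = (a : G) * (((a : G)⁻¹ * (b : G)) * g) * (b : G)⁻¹ := by rw [hzc']
            _ = (b : G) * g * (b : G)⁻¹ := by group)
    have hfb : Function.Bijective f := by
      constructor
      · intro q q' h
        obtain ⟨a, rfl⟩ := Quotient.exists_rep q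
        obtain ⟨b, rfl⟩ := Quotient.exists_rep q'
        have h' : (a : G) * g * (a : G)⁻¹ = (b : G) * g * (b : G)⁻¹ :=
          congrArg Subtype.val h
        have h3 : ((b : G)⁻¹ * (a : G)) * g * ((b : G)⁻¹ * (a : G))⁻¹ = g := by
          calc ((b : G)⁻¹ * (a : G)) * g * ((b : G)⁻¹ * (a : G))⁻¹
              = (b : G)⁻¹ * ((a : G) * g * (a : G)⁻¹) * (b : G) := by group
            _ = (b : G)⁻¹ * ((b : G) * g * (b : G)⁻¹) * (b : G) := by rw [h']
            _ = g := by group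
        have hcc : ((b : G)⁻¹ * (a : G)) * g = g * ((b : G)⁻¹ * (a : G)) := by
          conv_rhs => rw [← h3]
          group
        have hcZ : (b : G)⁻¹ * (a : G) ∈ Z :=
          hcentL g hg hgZ _ (Subgroup.mul_mem _ (Subgroup.inv_mem _ b.2) a.2) hcc
        apply Quotient.sound
        show @Setoid.r _ (QuotientGroup.leftRel (Z.subgroupOf L)) a b
        rw [QuotientGroup.leftRel_apply, Subgroup.mem_subgroupOf]
        have heq : ((a⁻¹ * b : ↥L) : G) = ((b : G)⁻¹ * (a : G))⁻¹ := by
          simp [mul_comm]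
        rw [heq]
        exact Subgroup.inv_mem _ hcZ
      · rintro ⟨h, hc⟩
        obtain ⟨c, hc'⟩ := isConj_iff.mp hc
        obtain ⟨k, hk, l, hl, hkl⟩ := hdec c
        obtain ⟨k₀, hk₀, z, hz, hkz⟩ := hdecKZ g hg
        refine ⟨Quotient.mk'' ⟨l, hl⟩, Subtype.ext ?_⟩
        show l * g * l⁻¹ = h
        rw [← hc', ← hkl]
        symm
        have hzc := Subgroup.mem_center_iff.mp hz
        have hw : l * g * l⁻¹ = (l * k₀ * l⁻¹) * z := by
          rw [← hkz]
          calc l * (k₀ * z) * l⁻¹ = l * k₀ * (z * l⁻¹) := by group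
            _ = l * k₀ * (l⁻¹ * z) := by rw [← hzc l⁻¹]
            _ = (l * k₀ * l⁻¹) * z := by group
        have hlkK : l * k₀ * l⁻¹ ∈ K := hKn.conj_mem k₀ hk₀ l
        have hkw : k * (l * g * l⁻¹) = (l * g * l⁻¹) * k := by
          rw [hw]
          have h1 : k * (l * k₀ * l⁻¹) = (l * k₀ * l⁻¹) * k := hKab k hk _ hlkK
          calc k * ((l * k₀ * l⁻¹) * z) = (k * (l * k₀ * l⁻¹)) * z := by group
            _ = ((l * k₀ * l⁻¹) * k) * z := by rw [h1]
            _ = (l * k₀ * l⁻¹) * (k * z) := by group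
            _ = (l * k₀ * l⁻¹) * (z * k) := by rw [hzc k]
            _ = ((l * k₀ * l⁻¹) * z) * k := by group
        calc (k * l) * g * (k * l)⁻¹ = k * (l * g * l⁻¹) * k⁻¹ := by group
          _ = (l * g * l⁻¹) * k * k⁻¹ := by rw [hkw]
          _ = l * g * l⁻¹ := by group
    have hcard := Nat.card_congr (Equiv.ofBijective f hfb)
    rw [← hcard]
    rfl
  have sizeN : ∀ g ∈ L, g ∉ Z →
      Nat.card {h : G // IsConj g h} = Nat.card K := by
    intro g hgL hgZ
    have hgKZ : g ∉ K ⊔ Z := fun h => hgZ (hKZinL g h hgL)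
    let f : ↥K → {h : G // IsConj g h} := fun k =>
      ⟨(k : G) * g * (k : G)⁻¹, isConj_iff.mpr ⟨k, rfl⟩⟩
    have hfb : Function.Bijective f := by
      constructor
      · intro a b h
        have h' : (a : G) * g * (a : G)⁻¹ = (b : G) * g * (b : G)⁻¹ :=
          congrArg Subtype.val h
        have h3 : ((b : G)⁻¹ * (a : G)) * g * ((b : G)⁻¹ * (a : G))⁻¹ = g := by
          calc ((b : G)⁻¹ * (a : G)) * g * ((b : G)⁻¹ * (a : G))⁻¹
              = (b : G)⁻¹ * ((a : G) * g * (a : G)⁻¹) * (b : G) := by group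
            _ = (b : G)⁻¹ * ((b : G) * g * (b : G)⁻¹) * (b : G) := by rw [h']
            _ = g := by group
        have hcc : ((b : G)⁻¹ * (a : G)) * g = g * ((b : G)⁻¹ * (a : G)) := by
          conv_rhs => rw [← h3]
          group
        have hone : (b : G)⁻¹ * (a : G) = 1 :=
          hcentK g hgKZ _ (Subgroup.mul_mem _ (Subgroup.inv_mem _ b.2) a.2) hcc
        exact Subtype.ext (inv_mul_eq_one.mp hone).symm
      · rintro ⟨h, hc⟩
        obtain ⟨c, hc'⟩ := isConj_iff.mp hc
        obtain ⟨k, hk, l, hl, hkl⟩ := hdec c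
        refine ⟨⟨k, hk⟩, Subtype.ext ?_⟩
        show k * g * k⁻¹ = h
        rw [← hc', ← hkl]
        symm
        have hlg : l * g = g * l := hLab l hl g hgL
        calc (k * l) * g * (k * l)⁻¹ = k * (l * g) * l⁻¹ * k⁻¹ := by group
          _ = k * (g * l) * l⁻¹ * k⁻¹ := by rw [hlg]
          _ = k * g * k⁻¹ := by group
    exact (Nat.card_congr (Equiv.ofBijective f hfb)).symm
  have sizeN' : ∀ g : G, g ∉ K ⊔ Z →
      Nat.card {h : G // IsConj g h} = Nat.card K := by
    intro g hg
    obtain ⟨k₀, hk₀, l₀, hl₀, hkl⟩ := hdec g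
    have hl₀Z : l₀ ∉ Z := by
      intro h
      exact hg (by
        rw [← hkl]
        exact Subgroup.mul_mem _ (Subgroup.mem_sup_left hk₀) (Subgroup.mem_sup_right h))
    have hl₀KZ : l₀ ∉ K ⊔ Z := fun h => hl₀Z (hKZinL l₀ h hl₀)
    let ψ : ↥K → ↥K := fun k =>
      ⟨(l₀ * (k : G) * l₀⁻¹) * (k : G)⁻¹,
        Subgroup.mul_mem _ (hKn.conj_mem _ k.2 l₀) (Subgroup.inv_mem _ k.2)⟩
    have hinj : Function.Injective ψ := by
      intro a b h
      have h' : (l₀ * (a : G) * l₀⁻¹) * (a : G)⁻¹ = (l₀ * (b : G) * l₀⁻¹) * (b : G)⁻¹ :=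
        congrArg Subtype.val h
      have hd : l₀ * ((b : G)⁻¹ * (a : G)) * l₀⁻¹ = (b : G)⁻¹ * (a : G) := by
        calc l₀ * ((b : G)⁻¹ * (a : G)) * l₀⁻¹
            = (l₀ * (b : G) * l₀⁻¹)⁻¹ * ((l₀ * (a : G) * l₀⁻¹) * (a : G)⁻¹) * (a : G) := by
              group
          _ = (l₀ * (b : G) * l₀⁻¹)⁻¹ * ((l₀ * (b : G) * l₀⁻¹) * (b : G)⁻¹) * (a : G) := by
              rw [h']
          _ = (b : G)⁻¹ * (a : G) := by group
      have hcomm : ((b : G)⁻¹ * (a : G)) * l₀ = l₀ * ((b : G)⁻¹ * (a : G)) := by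
        conv_lhs => rw [← hd]
        group
      have hone : (b : G)⁻¹ * (a : G) = 1 :=
        hcentK l₀ hl₀KZ _ (Subgroup.mul_mem _ (Subgroup.inv_mem _ b.2) a.2) hcomm
      exact Subtype.ext (inv_mul_eq_one.mp hone).symm
    obtain ⟨k, hk⟩ := (Finite.injective_iff_surjective.mp hinj) ⟨k₀, hk₀⟩
    have hkeq : (l₀ * (k : G) * l₀⁻¹) * (k : G)⁻¹ = k₀ := congrArg Subtype.val hk
    have hconj : IsConj g l₀ := by
      refine isConj_iff.mpr ⟨(k : G), ?_⟩
      rw [← hkl, ← hkeq]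
      have hcm : (k : G) * (l₀ * (k : G) * l₀⁻¹) = (l₀ * (k : G) * l₀⁻¹) * (k : G) :=
        hKab _ k.2 _ (hKn.conj_mem _ k.2 l₀)
      calc (k : G) * ((l₀ * (k : G) * l₀⁻¹) * (k : G)⁻¹ * l₀) * (k : G)⁻¹
          = ((k : G) * (l₀ * (k : G) * l₀⁻¹)) * ((k : G)⁻¹ * (l₀ * (k : G)⁻¹)) := by group
        _ = ((l₀ * (k : G) * l₀⁻¹) * (k : G)) * ((k : G)⁻¹ * (l₀ * (k : G)⁻¹)) := by
            rw [hcm]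
        _ = l₀ := by group
    have e : {h : G // IsConj g h} ≃ {h : G // IsConj l₀ h} :=
      Equiv.subtypeEquivRight (fun h => ⟨fun hh => hconj.symm.trans hh, fun hh => hconj.trans hh⟩)
    rw [Nat.card_congr e]
    exact sizeN l₀ hl₀ hl₀Z
  -- K is nontrivial
  have hKne : ∃ k ∈ K, k ≠ (1 : G) := by
    by_contra hcon
    push_neg at hcon
    have hKbot : K = ⊥ := by
      ext k
      simp only [Subgroup.mem_bot]
      exact ⟨fun h => hcon k h, fun h => h ▸ Subgroup.one_mem K⟩
    have hLtop : L = ⊤ := by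
      rw [hKbot, bot_sup_eq] at hKLt
      exact hKLt
    have hZtop : Z = ⊤ := by
      rw [eq_top_iff]
      intro a _
      rw [hZdef]
      exact Subgroup.mem_center_iff.mpr fun b =>
        hLab b (by rw [hLtop]; trivial) a (by rw [hLtop]; trivial)
    rw [hZtop, hLtop] at hZL
    exact lt_irrefl ⊤ hZL
  obtain ⟨k₁, hk₁K, hk₁1⟩ := hKne
  obtain ⟨l₁, hl₁L, hl₁Z⟩ := SetLike.exists_of_lt hZL
  have hm2 : 1 < Z.relIndex L := by
    have hne : Z.subgroupOf L ≠ ⊤ := by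
      intro h
      apply hl₁Z
      have hmem : (⟨l₁, hl₁L⟩ : ↥L) ∈ Z.subgroupOf L := by rw [h]; trivial
      exact Subgroup.mem_subgroupOf.mp hmem
    exact Subgroup.one_lt_index_of_ne_top hne
  -- counting : |K| ≡ 1 mod m
  let S := {k : ↥K // k ≠ 1}
  letI sm : SMul ↥L S :=
    ⟨fun l s => ⟨⟨(l : G) * ((s : ↥K) : G) * (l : G)⁻¹, hKn.conj_mem _ (s : ↥K).2 l⟩, by
      intro h
      apply s.2
      have h1 : (l : G) * ((s : ↥K) : G) * (l : G)⁻¹ = 1 := congrArg Subtype.val h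
      have h2 : ((s : ↥K) : G) = 1 := by
        have h3 : ((s : ↥K) : G) = (l : G)⁻¹ * 1 * (l : G) := by rw [← h1]; group
        simpa using h3
      exact Subtype.ext h2⟩⟩
  letI act : MulAction ↥L S :=
    { toSMul := sm
      one_smul := by
        intro b
        apply Subtype.ext
        apply Subtype.ext
        show ((1 : ↥L) : G) * ((b : ↥K) : G) * ((1 : ↥L) : G)⁻¹ = ((b : ↥K) : G)
        simp
      mul_smul := by
        intro x y b
        apply Subtype.ext
        apply Subtype.ext
        show ((x * y : ↥L) : G) * ((b : ↥K) : G) * ((x * y : ↥L) : G)⁻¹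
            = (x : G) * ((y : G) * ((b : ↥K) : G) * (y : G)⁻¹) * (x : G)⁻¹
        simp [mul_assoc] }
  have horb : ∀ s : S, MulAction.stabilizer ↥L s = Z.subgroupOf L := by
    intro s
    ext l
    simp only [MulAction.mem_stabilizer_iff, Subgroup.mem_subgroupOf]
    constructor
    · intro h
      have h1 : (l : G) * ((s : ↥K) : G) * (l : G)⁻¹ = ((s : ↥K) : G) :=
        congrArg (fun t : S => ((t : ↥K) : G)) h
      have hcomm : (l : G) * ((s : ↥K) : G) = ((s : ↥K) : G) * (l : G) := by
        conv_rhs => rw [← h1]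
        group
      have hne1 : ((s : ↥K) : G) ≠ 1 := fun h0 => s.2 (Subtype.ext h0)
      exact hKZinL _ (hkey _ (s : ↥K).2 hne1 l hcomm) l.2
    · intro h
      have hzc := Subgroup.mem_center_iff.mp h
      apply Subtype.ext
      apply Subtype.ext
      show (l : G) * ((s : ↥K) : G) * (l : G)⁻¹ = ((s : ↥K) : G)
      calc (l : G) * ((s : ↥K) : G) * (l : G)⁻¹
          = (((s : ↥K) : G) * (l : G)) * (l : G)⁻¹ := by rw [hzc]
        _ = ((s : ↥K) : G) := by group
  have horbcard : ∀ ω : MulAction.orbitRel.Quotient ↥L S,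
      Nat.card (MulAction.orbit ↥L ω.out) = Z.relIndex L := by
    intro ω
    rw [Nat.card_congr (MulAction.orbitEquivQuotientStabilizer ↥L ω.out), horb]
    rfl
  have hScard : Nat.card S = Nat.card (MulAction.orbitRel.Quotient ↥L S) * Z.relIndex L := by
    haveI : Fintype S := Fintype.ofFinite _
    haveI : Fintype (MulAction.orbitRel.Quotient ↥L S) := Fintype.ofFinite _
    haveI : ∀ ω : MulAction.orbitRel.Quotient ↥L S,
        Fintype (MulAction.orbit ↥L ω.out) := fun ω => Fintype.ofFinite _
    rw [Nat.card_congr (MulAction.selfEquivSigmaOrbits ↥L S)]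
    rw [Nat.card_eq_fintype_card, Fintype.card_sigma]
    have hconst : ∀ ω : MulAction.orbitRel.Quotient ↥L S,
        Fintype.card (MulAction.orbit ↥L ω.out) = Z.relIndex L := fun ω => by
      rw [← Nat.card_eq_fintype_card, horbcard]
    rw [Finset.sum_congr rfl (fun ω _ => hconst ω), Finset.sum_const, smul_eq_mul,
      Finset.card_univ, Nat.card_eq_fintype_card]
  have hKcard : Nat.card K = Nat.card S + 1 := by
    have e : ↥K ≃ {k : ↥K // k = 1} ⊕ S := (Equiv.sumCompl (fun k : ↥K => k = 1)).symm
    rw [Nat.card_congr e, Nat.card_sum]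
    haveI : Unique {k : ↥K // k = 1} := ⟨⟨⟨1, rfl⟩⟩, by rintro ⟨k, rfl⟩; rfl⟩
    rw [Nat.card_unique, add_comm]
  have hqm : Nat.card K % Z.relIndex L = 1 := by
    rw [hKcard, hScard, mul_comm, Nat.mul_add_mod]
    exact Nat.mod_eq_of_lt hm2
  refine ⟨?_, hqm, ?_⟩
  · ext t
    simp only [csSet, Set.mem_setOf_eq, Set.mem_insert_iff, Set.mem_singleton_iff]
    constructor
    · rintro ⟨g, rfl⟩
      by_cases hg1 : g ∈ Z
      · exact Or.inl (sizeZ g hg1)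
      · by_cases hg2 : g ∈ K ⊔ Z
        · exact Or.inr (Or.inl (sizeM g hg2 hg1))
        · exact Or.inr (Or.inr (sizeN' g hg2))
    · rintro (rfl | rfl | rfl)
      · exact ⟨1, (sizeZ 1 (Subgroup.one_mem Z)).symm⟩
      · refine ⟨k₁, (sizeM k₁ (Subgroup.mem_sup_left hk₁K) ?_).symm⟩
        intro h
        exact hk₁1 (hKZtriv k₁ hk₁K h)
      · exact ⟨l₁, (sizeN l₁ hl₁L hl₁Z).symm⟩
  · rw [Nat.Coprime, Nat.gcd_rec, hqm, Nat.gcd_one_left]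
end

section
/- Let G be a finite Frobenius group with abelian kernel K and abelian complement L. Then the set of non-trivial conjugacy class sizes of G is exactly {|K|, |L|}. -/
/-- The set of non-central conjugacy class sizes of a group. -/
def csStar (G : Type*) [Group G] : Set ℕ := csSet G \ {1}

/-- Orbit-stabilizer for conjugacy classes. -/
theorem class_size_mul_centralizer (G : Type*) [Group G] [Finite G] (g : G) :
    Nat.card {h : G // IsConj g h} * Nat.card (Subgroup.centralizer {g}) = Nat.card G := by
  have h1 : {h : G | IsConj g h} = MulAction.orbit (ConjAct G) g := by
    ext h
    rw [Set.mem_setOf_eq, ConjAct.mem_orbit_conjAct]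
    exact ⟨IsConj.symm, IsConj.symm⟩
  have hc : Nat.card {h : G // IsConj g h} = Nat.card (MulAction.orbit (ConjAct G) g) :=
    Nat.card_congr (Equiv.setCongr h1)
  have hs : Nat.card (Subgroup.centralizer ({g} : Set G))
      = Nat.card (MulAction.stabilizer (ConjAct G) g) := by
    rw [Subgroup.centralizer_eq_comap_stabilizer]
    exact Nat.card_congr
      ⟨fun x => ⟨ConjAct.toConjAct x.1, x.2⟩,
       fun y => ⟨ConjAct.ofConjAct y.1, y.2⟩,
       fun x => rfl, fun y => rfl⟩
  have := Fintype.ofFinite G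
  have := Fintype.ofFinite (ConjAct G)
  have := Fintype.ofFinite (MulAction.orbit (ConjAct G) g)
  have := Fintype.ofFinite (MulAction.stabilizer (ConjAct G) g)
  rw [hc, hs]
  simp only [Nat.card_eq_fintype_card]
  rw [MulAction.card_orbit_mul_card_stabilizer_eq_card_group (ConjAct G) g]
  exact (Fintype.card_congr ConjAct.ofConjAct.toEquiv)

theorem conj_class_size_eq {G : Type*} [Group G] {g g' : G} (h : IsConj g g') :
    Nat.card {h : G // IsConj g h} = Nat.card {h : G // IsConj g' h} := by
  apply Nat.card_congr
  apply Equiv.setCongr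
  ext x
  exact ⟨fun hx => h.symm.trans hx, fun hx => h.trans hx⟩

open scoped Pointwise

/-- Let `G` be a finite Frobenius group with abelian kernel `K` and abelian
complement `L`: `K` is normal, `G = K ⋊ L`, distinct conjugates of `L` meet
trivially, `C_G(k) ≤ K` for nontrivial `k ∈ K`, and `K = {1} ∪ (G \ ⋃_g L^g)`.
Then the set of non-trivial conjugacy class sizes of `G` is `{|K|, |L|}`. -/
theorem csStar_frobenius_abelian (G : Type*) [Group G] [Finite G]
    (K L : Subgroup G) (hKn : K.Normal)
    (hKab : ∀ x ∈ K, ∀ y ∈ K, x * y = y * x)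
    (hLab : ∀ x ∈ L, ∀ y ∈ L, x * y = y * x)
    (hcompl : IsCompl K L) (hLbot : L ≠ ⊥) (hLtop : L ≠ ⊤)
    (hfrob : ∀ g : G, g ∉ L → conjSub g L ⊓ L = ⊥)
    (hcent : ∀ k ∈ K, k ≠ 1 → Subgroup.centralizer {k} ≤ K)
    (hker : (K : Set G) = {1} ∪ (Set.univ \ ⋃ g : G, (conjSub g L : Set G))) :
    csStar G = {Nat.card K, Nat.card L} := by
  -- |K| * |L| = |G|
  have hmul : (K : Set G) * (L : Set G) = Set.univ := by
    rw [← Subgroup.normal_mul K L, codisjoint_iff.mp hcompl.codisjoint]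
    rfl
  have hKL : Nat.card K * Nat.card L = Nat.card G :=
    (Subgroup.isComplement'_of_disjoint_and_mul_eq_univ hcompl.disjoint hmul).card_mul
  -- K is nontrivial
  have hKbot : K ≠ ⊥ := by
    intro h
    apply hLtop
    have := codisjoint_iff.mp hcompl.codisjoint
    rwa [h, bot_sup_eq] at this
  have hKpos : 0 < Nat.card K := Nat.card_pos
  have hLpos : 0 < Nat.card L := Nat.card_pos
  -- centralizers
  have hcentK : ∀ k ∈ K, k ≠ 1 → Subgroup.centralizer {k} = K := by
    intro k hk hk1
    refine le_antisymm (hcent k hk hk1) fun x hx => ?_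
    exact Subgroup.mem_centralizer_singleton_iff.mpr (hKab x hx k hk)
  have hcentL : ∀ l ∈ L, l ≠ 1 → Subgroup.centralizer {l} = L := by
    intro l hl hl1
    refine le_antisymm ?_ fun x hx => Subgroup.mem_centralizer_singleton_iff.mpr (hLab x hx l hl)
    intro c hc
    by_contra hcL
    have hcomm : c * l = l * c := Subgroup.mem_centralizer_singleton_iff.mp hc
    have h2 : l ∈ conjSub c L ⊓ L := by
      refine Subgroup.mem_inf.mpr ⟨?_, hl⟩
      refine Subgroup.mem_map.mpr ⟨l, hl, ?_⟩
      show c * l * c⁻¹ = l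
      rw [hcomm, mul_inv_cancel_right]
    rw [hfrob c hcL] at h2
    exact hl1 (Subgroup.mem_bot.mp h2)
  -- class sizes
  have hsizeK : ∀ k ∈ K, k ≠ 1 → Nat.card {h : G // IsConj k h} = Nat.card L := by
    intro k hk hk1
    have := class_size_mul_centralizer G k
    rw [hcentK k hk hk1, ← hKL, mul_comm (Nat.card K)] at this
    exact Nat.eq_of_mul_eq_mul_right hKpos this
  have hsizeL : ∀ l ∈ L, l ≠ 1 → Nat.card {h : G // IsConj l h} = Nat.card K := by
    intro l hl hl1
    have := class_size_mul_centralizer G l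
    rw [hcentL l hl hl1, ← hKL] at this
    exact Nat.eq_of_mul_eq_mul_right hLpos this
  ext n
  constructor
  · rintro ⟨⟨g, rfl⟩, hn1⟩
    simp only [Set.mem_singleton_iff] at hn1
    have hg1 : g ≠ 1 := by
      rintro rfl
      apply hn1
      have : {h : G | IsConj 1 h} = {1} := by
        ext h
        simp [isConj_comm, isConj_one_right, eq_comm]
      exact (Nat.card_congr (Equiv.setCongr this)).trans (by simp)
    by_cases hgK : g ∈ K
    · right
      exact hsizeK g hgK hg1
    · left
      -- g lies in some conjugate of L
      have : g ∈ ({1} : Set G) ∪ (Set.univ \ ⋃ x : G, (conjSub x L : Set G)) ↔ g ∈ K := by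
        rw [← hker]; rfl
      have hg2 : g ∈ ⋃ x : G, (conjSub x L : Set G) := by
        by_contra h
        exact hgK (this.mp (Or.inr ⟨trivial, h⟩))
      obtain ⟨_, ⟨x, rfl⟩, hgx⟩ := hg2
      obtain ⟨l, hl, hxl⟩ := Subgroup.mem_map.mp hgx
      have hxl' : x * l * x⁻¹ = g := hxl
      have hl1 : l ≠ 1 := by
        rintro rfl
        apply hg1
        rw [← hxl']
        simp
      have hconj : IsConj l g := isConj_iff.mpr ⟨x, hxl'⟩
      rw [← conj_class_size_eq hconj]
      exact hsizeL l hl hl1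
  · intro hn
    -- nontrivial elements of K and L exist
    obtain ⟨k, hkK, hk1⟩ := (Subgroup.nontrivial_iff_exists_ne_one K).mp
      (Subgroup.nontrivial_iff_ne_bot K |>.mpr hKbot)
    obtain ⟨l, hlL, hl1⟩ := (Subgroup.nontrivial_iff_exists_ne_one L).mp
      (Subgroup.nontrivial_iff_ne_bot L |>.mpr hLbot)
    have hKne1 : Nat.card K ≠ 1 := fun h => hKbot (Subgroup.card_eq_one.mp h)
    have hLne1 : Nat.card L ≠ 1 := fun h => hLbot (Subgroup.card_eq_one.mp h)
    rcases hn with rfl | hn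
    · exact ⟨⟨l, (hsizeL l hlL hl1).symm⟩, by simpa using hKne1⟩
    · rw [Set.mem_singleton_iff] at hn
      subst hn
      exact ⟨⟨k, (hsizeK k hkK hk1).symm⟩, by simpa using hLne1⟩
end

section
/- For every positive integer n, there exists a finite group G such that {1, 2, ..., n} ⊆ cs(G). -/
/-- The wreath product `C₂ ≀ C_k`, realized concretely on
`ZMod k × (ZMod k → ZMod 2)`. -/
def Gk (k : ℕ) : Type := ZMod k × (ZMod k → ZMod 2)

instance (k : ℕ) : Group (Gk k) where
  mul a b := (a.1 + b.1, fun x => a.2 (x - b.1) + b.2 x)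
  one := ((0 : ZMod k), (0 : ZMod k → ZMod 2))
  inv a := (-a.1, fun x => -a.2 (x + a.1))
  mul_assoc a b c := by
    refine Prod.ext (add_assoc _ _ _) (funext fun x => ?_)
    show a.2 (x - c.1 - b.1) + b.2 (x - c.1) + c.2 x
        = a.2 (x - (b.1 + c.1)) + (b.2 (x - c.1) + c.2 x)
    rw [sub_sub, add_comm c.1 b.1, add_assoc]
  one_mul a := by
    refine Prod.ext (zero_add _) (funext fun x => ?_)
    show 0 + a.2 x = a.2 x
    rw [zero_add]
  mul_one a := by
    refine Prod.ext (add_zero _) (funext fun x => ?_)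
    show a.2 (x - 0) + 0 = a.2 x
    rw [sub_zero, add_zero]
  inv_mul_cancel a := by
    refine Prod.ext (neg_add_cancel _) (funext fun x => ?_)
    show -a.2 (x - a.1 + a.1) + a.2 x = 0
    rw [sub_add_cancel, neg_add_cancel]

instance (k : ℕ) [NeZero k] : Finite (Gk k) :=
  inferInstanceAs (Finite (ZMod k × (ZMod k → ZMod 2)))

/-- The delta function at 0. -/
def dlt (k : ℕ) : ZMod k → ZMod 2 := fun x => if x = 0 then 1 else 0

/-- The distinguished element of `Gk k` whose conjugacy class has size `k`. -/
def gk (k : ℕ) : Gk k := ((0 : ZMod k), dlt k)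

lemma Gk.mul_def {k : ℕ} (a b : Gk k) :
    a * b = (a.1 + b.1, fun x => a.2 (x - b.1) + b.2 x) := rfl

lemma Gk.inv_def {k : ℕ} (a : Gk k) :
    a⁻¹ = (-a.1, fun x => -a.2 (x + a.1)) := rfl

lemma Gk.conj_gk {k : ℕ} (c : Gk k) :
    c * gk k * c⁻¹ = ((0 : ZMod k), fun x => dlt k (x + c.1)) := by
  obtain ⟨b, g⟩ := c
  refine Prod.ext ?_ (funext fun x => ?_)
  · show b + 0 + -b = 0
    ring
  · show (fun y => g (y - 0) + dlt k y) (x - -b) + -g (x + b) = dlt k (x + b)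
    simp [sub_neg_eq_add]
    rw [add_right_comm, CharTwo.add_self_eq_zero, zero_add]

lemma isConj_gk_iff {k : ℕ} (h : Gk k) :
    IsConj (gk k) h ↔ ∃ b : ZMod k, h = ((0 : ZMod k), fun x => dlt k (x + b)) := by
  constructor
  · rw [isConj_iff]
    rintro ⟨c, rfl⟩
    exact ⟨c.1, Gk.conj_gk c⟩
  · rintro ⟨b, rfl⟩
    refine isConj_iff.2 ?_
    exact ⟨((b : ZMod k), (0 : ZMod k → ZMod 2)), Gk.conj_gk _⟩

lemma dlt_shift_injective {k : ℕ} : Function.Injective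
    (fun b : ZMod k => (fun x => dlt k (x + b) : ZMod k → ZMod 2)) := by
  intro b b' hb
  have h := congrFun hb (-b)
  simp only [dlt, neg_add_cancel, if_pos rfl] at h
  by_cases h0 : -b + b' = 0
  · exact neg_add_eq_zero.mp h0
  · rw [if_neg h0] at h
    exact absurd h.symm (by decide)

/-- The conjugacy class of `gk k` is in bijection with `ZMod k`. -/
noncomputable def classEquiv (k : ℕ) : {h : Gk k // IsConj (gk k) h} ≃ ZMod k where
  toFun h := Classical.choose ((isConj_gk_iff h.1).1 h.2)
  invFun b := ⟨((0 : ZMod k), fun x => dlt k (x + b)), (isConj_gk_iff _).2 ⟨b, rfl⟩⟩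
  left_inv h := by
    apply Subtype.ext
    exact (Classical.choose_spec ((isConj_gk_iff h.1).1 h.2)).symm
  right_inv b := by
    apply dlt_shift_injective
    have := Classical.choose_spec ((isConj_gk_iff
      (((0 : ZMod k), fun x => dlt k (x + b)) : Gk k)).1 ((isConj_gk_iff _).2 ⟨b, rfl⟩))
    exact congrArg Prod.snd this.symm

lemma card_class_gk (k : ℕ) : Nat.card {h : Gk k // IsConj (gk k) h} = k := by
  rw [Nat.card_congr (classEquiv k), Nat.card_zmod]

lemma card_class_one (H : Type*) [Group H] :
    Nat.card {h : H // IsConj (1 : H) h} = 1 := by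
  rw [Nat.card_eq_one_iff_unique]
  constructor
  · refine ⟨fun a b => Subtype.ext ?_⟩
    rw [isConj_one_left.1 a.2.symm, isConj_one_left.1 b.2.symm]
  · exact ⟨⟨1, IsConj.refl 1⟩⟩

lemma isConj_pi {ι : Type*} {G : ι → Type*} [∀ i, Group (G i)] (g h : ∀ i, G i) :
    IsConj g h ↔ ∀ i, IsConj (g i) (h i) := by
  constructor
  · rw [isConj_iff]
    rintro ⟨c, rfl⟩ i
    exact isConj_iff.2 ⟨c i, rfl⟩
  · intro hi
    choose c hc using fun i => isConj_iff.1 (hi i)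
    exact isConj_iff.2 ⟨c, funext hc⟩

noncomputable def piClassEquiv {ι : Type*} {G : ι → Type*} [∀ i, Group (G i)]
    (g : ∀ i, G i) :
    {h : ∀ i, G i // IsConj g h} ≃ ∀ i, {x : G i // IsConj (g i) x} where
  toFun h := fun i => ⟨h.1 i, (isConj_pi g h.1).1 h.2 i⟩
  invFun F := ⟨fun i => (F i).1, (isConj_pi g _).2 fun i => (F i).2⟩
  left_inv h := rfl
  right_inv F := rfl

/-- For every positive integer `n` there is a finite group `G` with
`{1, 2, …, n} ⊆ cs(G)`. -/
theorem exists_group_cs_contains_Icc (n : ℕ) (hn : 1 ≤ n) :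
    ∃ (G : Type) (_ : Group G) (_ : Finite G),
      ∀ k : ℕ, 1 ≤ k → k ≤ n → k ∈ csSet G := by
  refine ⟨∀ i : Fin n, Gk (i.1 + 1), inferInstance, inferInstance, ?_⟩
  intro k hk1 hkn
  refine ⟨fun i => if i.1 = k - 1 then gk (i.1 + 1) else 1, ?_⟩
  rw [Nat.card_congr (piClassEquiv _), Nat.card_pi]
  have key : ∀ i : Fin n,
      Nat.card {x : Gk (i.1 + 1) // IsConj
        ((if i.1 = k - 1 then gk (i.1 + 1) else 1)) x}
      = if i.1 = k - 1 then k else 1 := by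
    intro i
    by_cases h : i.1 = k - 1
    · simp only [if_pos h]
      rw [card_class_gk]
      omega
    · simp only [if_neg h]
      exact card_class_one _
  rw [Finset.prod_congr rfl (fun i _ => key i),
    Finset.prod_eq_single (⟨k - 1, by omega⟩ : Fin n)
      (fun b _ hb => if_neg fun hb' => hb (Fin.ext hb'))
      (fun habs => absurd (Finset.mem_univ _) habs)]
  simp
end

section
/- Let G be a finite group with a normal subgroup H such that G/H ≅ S_3 and such that every element g ∈ G whose image in G/H has order 2 satisfies |g^G| = 6 and |H : C_H(g)| = 2. Let T be the set of such elements g. Then C_H(T) = Z(G), the quotient H/Z(G) is an elementary abelian 2-group, and H ≠ Z(G). -/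
private lemma order_two_iff' {M : Type*} [Monoid M] (x : M) :
    orderOf x = 2 ↔ x ≠ 1 ∧ x * x = 1 := by
  constructor
  · intro h
    refine ⟨fun h1 => by simp [h1] at h, ?_⟩
    have := pow_orderOf_eq_one x
    rwa [h, pow_two] at this
  · rintro ⟨h1, h2⟩
    haveI : Fact (Nat.Prime 2) := ⟨Nat.prime_two⟩
    exact orderOf_eq_prime (by rwa [pow_two]) h1

/-- Step A3: let `G` be finite with `H ⊴ G`, `G/H ≅ S₃`, and suppose every
`g ∈ G` whose image in `G/H` has order 2 satisfies `|g^G| = 6` and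
`|H : C_H(g)| = 2`. With `T` the set of such `g`, we have `C_H(T) = Z(G)`,
`H/Z(G)` is elementary abelian 2 (i.e. `x² ∈ Z(G)` for all `x ∈ H`), and
`H ≠ Z(G)`. -/
theorem step_A3 (G : Type*) [Group G] [Finite G]
    (H : Subgroup G) [H.Normal]
    (iso : (G ⧸ H) ≃* Equiv.Perm (Fin 3))
    (T : Set G) (hT : T = {g : G | orderOf (QuotientGroup.mk g : G ⧸ H) = 2})
    (hclass : ∀ g ∈ T, Nat.card {h : G // IsConj g h} = 6)
    (hcent : ∀ g ∈ T, (Subgroup.centralizer {g}).relIndex H = 2) :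
    Subgroup.centralizer T ⊓ H = Subgroup.center G ∧
      (∀ x ∈ H, x ^ 2 ∈ Subgroup.center G) ∧
      H ≠ Subgroup.center G := by
  classical
  -- membership in T in terms of the permutation image
  have hmemT : ∀ g : G, g ∈ T ↔
      (iso (QuotientGroup.mk g) ≠ 1 ∧
        iso (QuotientGroup.mk g) * iso (QuotientGroup.mk g) = 1) := by
    intro g
    rw [hT, Set.mem_setOf_eq, ← orderOf_injective iso.toMonoidHom iso.injective,
      order_two_iff']
    rfl
  -- T is nonempty
  have hTne : ∃ g₀, g₀ ∈ T := by
    have h1 : ∃ σ : Equiv.Perm (Fin 3), σ ≠ 1 ∧ σ * σ = 1 := by decide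
    obtain ⟨σ, hσ⟩ := h1
    obtain ⟨g, hg⟩ := QuotientGroup.mk_surjective (iso.symm σ)
    refine ⟨g, (hmemT g).2 ?_⟩
    rw [hg, MulEquiv.apply_symm_apply]
    exact hσ
  obtain ⟨g₀, hg₀⟩ := hTne
  -- H is contained in the closure of T
  have hHle : H ≤ Subgroup.closure T := by
    intro h hh
    have h1 : g₀ * h ∈ T := by
      rw [hmemT] at hg₀ ⊢
      have he : (QuotientGroup.mk (g₀ * h) : G ⧸ H) = QuotientGroup.mk g₀ := by
        rw [QuotientGroup.mk_mul, (QuotientGroup.eq_one_iff h).2 hh, mul_one]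
      rw [he]; exact hg₀
    have h2 : h = g₀⁻¹ * (g₀ * h) := by group
    rw [h2]
    exact mul_mem (inv_mem (Subgroup.subset_closure hg₀)) (Subgroup.subset_closure h1)
  -- T generates G
  have hclT : Subgroup.closure T = ⊤ := by
    rw [eq_top_iff]
    intro g _
    have hdec : ∀ σ : Equiv.Perm (Fin 3), ∃ a b : Equiv.Perm (Fin 3),
        (a ≠ 1 ∧ a * a = 1) ∧ (b ≠ 1 ∧ b * b = 1) ∧ (σ = a * b ∨ σ = a) := by decide
    obtain ⟨a, b, ha, hb, hab⟩ := hdec (iso (QuotientGroup.mk g))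
    obtain ⟨ta, hta⟩ := QuotientGroup.mk_surjective (iso.symm a)
    obtain ⟨tb, htb⟩ := QuotientGroup.mk_surjective (iso.symm b)
    have hta2 : ta ∈ T := by
      rw [hmemT, hta, MulEquiv.apply_symm_apply]; exact ha
    have htb2 : tb ∈ T := by
      rw [hmemT, htb, MulEquiv.apply_symm_apply]; exact hb
    rcases hab with hab | hab
    · have hq : (QuotientGroup.mk (ta * tb) : G ⧸ H) = QuotientGroup.mk g := by
        apply iso.injective
        rw [QuotientGroup.mk_mul, map_mul, hta, htb, MulEquiv.apply_symm_apply,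
          MulEquiv.apply_symm_apply, hab]
      have hmem : (ta * tb)⁻¹ * g ∈ H := by
        rw [← QuotientGroup.eq_one_iff, QuotientGroup.mk_mul, QuotientGroup.mk_inv, hq,
          inv_mul_cancel]
      have h2 : g = (ta * tb) * ((ta * tb)⁻¹ * g) := by group
      rw [h2]
      exact mul_mem (mul_mem (Subgroup.subset_closure hta2) (Subgroup.subset_closure htb2))
        (hHle hmem)
    · have hq : (QuotientGroup.mk ta : G ⧸ H) = QuotientGroup.mk g := by
        apply iso.injective
        rw [hta, MulEquiv.apply_symm_apply, hab]
      have hmem : ta⁻¹ * g ∈ H := by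
        rw [← QuotientGroup.eq_one_iff, QuotientGroup.mk_mul, QuotientGroup.mk_inv, hq,
          inv_mul_cancel]
      have h2 : g = ta * (ta⁻¹ * g) := by group
      rw [h2]
      exact mul_mem (Subgroup.subset_closure hta2) (hHle hmem)
  -- the centralizer of T is the center
  have hcen : Subgroup.centralizer T = Subgroup.center G := by
    apply le_antisymm
    · intro x hx
      rw [Subgroup.mem_center_iff]
      intro g
      have hg : g ∈ Subgroup.closure T := hclT ▸ Subgroup.mem_top g
      induction hg using Subgroup.closure_induction with
      | mem t ht => exact Subgroup.mem_centralizer_iff.1 hx t ht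
      | one => simp
      | mul p q _ _ hp hq => rw [mul_assoc, hq, ← mul_assoc, hp, mul_assoc]
      | inv p _ hp =>
        calc p⁻¹ * x = p⁻¹ * (x * p) * p⁻¹ := by group
          _ = p⁻¹ * (p * x) * p⁻¹ := by rw [← hp]
          _ = x * p⁻¹ := by group
    · exact Subgroup.center_le_centralizer T
  -- the center is contained in H
  have hZH : Subgroup.center G ≤ H := by
    intro z hz
    have h1 : ∀ σ : Equiv.Perm (Fin 3), (∀ τ, τ * σ = σ * τ) → σ = 1 := by decide
    have h2 : iso (QuotientGroup.mk z) = 1 := by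
      apply h1
      intro τ
      obtain ⟨q, hq⟩ := iso.surjective τ
      obtain ⟨g, hg⟩ := QuotientGroup.mk_surjective q
      rw [← hq, ← hg, ← map_mul, ← map_mul]
      congr 1
      rw [← QuotientGroup.mk_mul, ← QuotientGroup.mk_mul, Subgroup.mem_center_iff.1 hz g]
    have h3 : (QuotientGroup.mk z : G ⧸ H) = 1 := by
      apply iso.injective; rw [h2, map_one]
    exact (QuotientGroup.eq_one_iff z).1 h3
  have hA : Subgroup.centralizer T ⊓ H = Subgroup.center G := by
    rw [hcen]; exact inf_eq_left.2 hZH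
  refine ⟨hA, ?_, ?_⟩
  · intro x hx
    rw [← hA]
    have hxc : x ^ 2 ∈ Subgroup.centralizer T := by
      rw [Subgroup.mem_centralizer_iff]
      intro g hgT
      have h2 : ((Subgroup.centralizer {g}).subgroupOf H).index = 2 := hcent g hgT
      have h3 := Subgroup.sq_mem_of_index_two h2 (⟨x, hx⟩ : H)
      have hx2 : x ^ 2 ∈ Subgroup.centralizer {g} := by
        simpa [Subgroup.mem_subgroupOf] using h3
      exact Subgroup.mem_centralizer_iff.1 hx2 g rfl
    exact Subgroup.mem_inf.2 ⟨hxc, pow_mem hx 2⟩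
  · intro hEq
    have h2 := hcent g₀ hg₀
    have hle : H ≤ Subgroup.centralizer {g₀} := by
      rw [hEq]; exact Subgroup.center_le_centralizer _
    rw [Subgroup.relIndex_eq_one.2 hle] at h2
    exact absurd h2 (by decide)
end

section
/- Let A be a finite nonabelian group and B < A a proper subgroup such that for every a ∈ A \ B the centralizer C_A(a) has index 2 in A. Then the derived subgroup A' has order 2. -/
namespace CommCardTwoAux

variable {A : Type*} [Group A]

lemma comm_of_eq_one {a x : A} (h : a⁻¹ * x⁻¹ * a * x = 1) : x * a = a * x := by
  have h2 := congrArg (fun t => x * a * t) h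
  have h3 : a * x = x * a := by simpa [mul_assoc] using h2
  exact h3.symm

lemma eq_one_of_comm {a x : A} (h : x * a = a * x) : a⁻¹ * x⁻¹ * a * x = 1 := by
  rw [mul_assoc, ← h]; group

lemma mem_cent_iff {a x : A} :
    x ∈ Subgroup.centralizer {a} ↔ a⁻¹ * x⁻¹ * a * x = 1 := by
  rw [Subgroup.mem_centralizer_singleton_iff]
  exact ⟨eq_one_of_comm, comm_of_eq_one⟩

lemma cent_symm_mem {a x : A} (h : x ∈ Subgroup.centralizer {a}) :
    a ∈ Subgroup.centralizer {x} :=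
  Subgroup.mem_centralizer_singleton_iff.mpr
    (Subgroup.mem_centralizer_singleton_iff.mp h).symm

lemma cent_symm {a x : A} (h : x ∉ Subgroup.centralizer {a}) :
    a ∉ Subgroup.centralizer {x} :=
  fun h2 => h (cent_symm_mem h2)

lemma mul_notin_left {C : Subgroup A} {c x : A} (hc : c ∈ C) (hx : x ∉ C) :
    c * x ∉ C :=
  fun h => hx (by simpa using C.mul_mem (C.inv_mem hc) h)

lemma mul_notin_right {C : Subgroup A} {c x : A} (hx : x ∉ C) (hc : c ∈ C) :
    x * c ∉ C :=
  fun h => hx (by simpa using C.mul_mem h (C.inv_mem hc))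

lemma conj_comm' {h z : A} (H : h⁻¹ * z * h = z) : h * z = z * h := by
  have h2 := congrArg (fun t => h * t) H
  simp only [mul_assoc] at h2
  rw [mul_inv_cancel_left] at h2
  exact h2.symm

lemma cz_const {a : A} (hCi : (Subgroup.centralizer {a}).index = 2)
    {x y : A} (hx : x ∉ Subgroup.centralizer {a}) (hy : y ∉ Subgroup.centralizer {a}) :
    a⁻¹ * x⁻¹ * a * x = a⁻¹ * y⁻¹ * a * y := by
  have hu : x * y⁻¹ ∈ Subgroup.centralizer {a} := by
    rw [Subgroup.mul_mem_iff_of_index_two hCi]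
    simp [hx, hy]
  have hcomm : a⁻¹ * (x * y⁻¹)⁻¹ * a * (x * y⁻¹) = 1 := mem_cent_iff.mp hu
  have h2 : (x * y⁻¹)⁻¹ * a * (x * y⁻¹) = a := by
    have h3 := congrArg (fun t => a * t) hcomm
    simpa [mul_assoc] using h3
  calc a⁻¹ * x⁻¹ * a * x
      = a⁻¹ * y⁻¹ * ((x * y⁻¹)⁻¹ * a * (x * y⁻¹)) * y := by group
    _ = a⁻¹ * y⁻¹ * a * y := by rw [h2]

lemma exists_notmem_pair {H K : Subgroup A} (hH : H ≠ ⊤) (hK : K ≠ ⊤) :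
    ∃ x : A, x ∉ H ∧ x ∉ K := by
  obtain ⟨u, hu⟩ : ∃ u, u ∉ H := by
    by_contra h; push_neg at h; exact hH ((Subgroup.eq_top_iff' H).mpr h)
  obtain ⟨v, hv⟩ : ∃ v, v ∉ K := by
    by_contra h; push_neg at h; exact hK ((Subgroup.eq_top_iff' K).mpr h)
  by_cases huK : u ∈ K
  · by_cases hvH : v ∈ H
    · refine ⟨u * v, ?_, ?_⟩
      · intro h; exact hu (by simpa using H.mul_mem h (H.inv_mem hvH))
      · intro h; exact hv (by simpa using K.mul_mem (K.inv_mem huK) h)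
    · exact ⟨v, hvH, hv⟩
  · exact ⟨u, hu, huK⟩

lemma cent_ne_top {a : A} (h : (Subgroup.centralizer {a}).index = 2) :
    Subgroup.centralizer {a} ≠ ⊤ := by
  intro ht; rw [ht, Subgroup.index_top] at h; omega

lemma key {B : Subgroup A} (hB : B < ⊤)
    (hcent : ∀ a : A, a ∉ B → (Subgroup.centralizer {a}).index = 2)
    {a : A} (ha : a ∉ B) :
    ∃ z : A, z ≠ 1 ∧ z * z = 1 ∧ (∀ h : A, h * z = z * h) ∧
      ∀ x : A, x ∉ Subgroup.centralizer {a} → a⁻¹ * x⁻¹ * a * x = z := by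
  have hCi := hcent a ha
  obtain ⟨g, hgB, hgC⟩ := exists_notmem_pair hB.ne (cent_ne_top hCi)
  set z := a⁻¹ * g⁻¹ * a * g with hz
  have hconst : ∀ x : A, x ∉ Subgroup.centralizer {a} → a⁻¹ * x⁻¹ * a * x = z :=
    fun x hx => cz_const hCi hx hgC
  have hz1 : z ≠ 1 := fun h => hgC (mem_cent_iff.mpr (by rw [← hz]; exact h))
  have haC : a ∈ Subgroup.centralizer {a} := mem_cent_iff.mpr (by group)
  have hgg : g * g ∈ Subgroup.centralizer {a} :=
    (Subgroup.mul_mem_iff_of_index_two hCi).mpr Iff.rfl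
  have e_gg : a⁻¹ * (g * g)⁻¹ * a * (g * g) = 1 := mem_cent_iff.mp hgg
  -- conjugation by g inverts z' = z⁻¹, hence fixes z
  have hgCi := hcent g hgB
  have ha_ning : a ∉ Subgroup.centralizer {g} := cent_symm hgC
  have hgCg : g ∈ Subgroup.centralizer {g} := mem_cent_iff.mpr (by group)
  have hag_ning : a * g ∉ Subgroup.centralizer {g} := mul_notin_right ha_ning hgCg
  have e2 : g⁻¹ * (a * g)⁻¹ * g * (a * g) = g⁻¹ * a⁻¹ * g * a :=
    cz_const hgCi hag_ning ha_ning
  have h3 : g⁻¹ * z⁻¹ * g = z⁻¹ := by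
    calc g⁻¹ * z⁻¹ * g = g⁻¹ * (a * g)⁻¹ * g * (a * g) := by rw [hz]; group
      _ = g⁻¹ * a⁻¹ * g * a := e2
      _ = z⁻¹ := by rw [hz]; group
  have hconj_g : g⁻¹ * z * g = z := by
    have h4 := congrArg (fun t => t⁻¹) h3
    simpa [mul_inv_rev, mul_assoc] using h4
  have hsq : z * z = 1 := by
    calc z * z = z * (g⁻¹ * z * g) := by rw [hconj_g]
      _ = a⁻¹ * (g * g)⁻¹ * a * (g * g) := by rw [hz]; group
      _ = 1 := e_gg
  have hcentral : ∀ h : A, h * z = z * h := by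
    intro h
    by_cases hh : h ∈ Subgroup.centralizer {a}
    · have hcomm_h : h * a = a * h := Subgroup.mem_centralizer_singleton_iff.mp hh
      have hswap : h⁻¹ * a⁻¹ = a⁻¹ * h⁻¹ := by
        have h5 := congrArg (fun t => t⁻¹) hcomm_h
        have h5' : a⁻¹ * h⁻¹ = h⁻¹ * a⁻¹ := by simpa [mul_inv_rev] using h5
        exact h5'.symm
      have hgh : g * h ∉ Subgroup.centralizer {a} := mul_notin_right hgC hh
      have e3 : a⁻¹ * (g * h)⁻¹ * a * (g * h) = z := hconst (g * h) hgh
      apply conj_comm'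
      calc h⁻¹ * z * h = (h⁻¹ * a⁻¹) * (g⁻¹ * a * g * h) := by rw [hz]; group
        _ = (a⁻¹ * h⁻¹) * (g⁻¹ * a * g * h) := by rw [hswap]
        _ = a⁻¹ * (g * h)⁻¹ * a * (g * h) := by group
        _ = z := e3
    · have e1 : a⁻¹ * h⁻¹ * a * h = z := hconst h hh
      have hgh : g * h ∈ Subgroup.centralizer {a} := by
        rw [Subgroup.mul_mem_iff_of_index_two hCi]
        simp [hgC, hh]
      have e4 : a⁻¹ * (g * h)⁻¹ * a * (g * h) = 1 := mem_cent_iff.mp hgh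
      have c1 : h⁻¹ * a⁻¹ * h = z⁻¹ * a⁻¹ := by rw [← e1]; group
      have c2 : h⁻¹ * (g⁻¹ * a * g) * h = a := by
        have h6 : a⁻¹ * (h⁻¹ * (g⁻¹ * a * g) * h) = 1 := by rw [← e4]; group
        exact (inv_mul_eq_one.mp h6).symm
      have key1 : h⁻¹ * z * h = z⁻¹ := by
        calc h⁻¹ * z * h
            = (h⁻¹ * a⁻¹ * h) * (h⁻¹ * (g⁻¹ * a * g) * h) := by rw [hz]; group
          _ = (z⁻¹ * a⁻¹) * a := by rw [c1, c2]
          _ = z⁻¹ := by group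
      have hzinv : z⁻¹ = z := inv_eq_of_mul_eq_one_right hsq
      apply conj_comm'
      rw [key1, hzinv]
  exact ⟨z, hz1, hsq, hcentral, hconst⟩

end CommCardTwoAux

open scoped commutatorElement in
open CommCardTwoAux in
/-- If `A` is a finite nonabelian group and `B < A` is a proper subgroup such
that every `a ∈ A \ B` has centralizer of index 2 in `A`, then `|A'| = 2`. -/
theorem commutator_card_two (A : Type*) [Group A] [Finite A]
    (hnab : ∃ x y : A, x * y ≠ y * x)
    (B : Subgroup A) (hB : B < ⊤)
    (hcent : ∀ a : A, a ∉ B → (Subgroup.centralizer {a}).index = 2) :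
    Nat.card (commutator A) = 2 := by
  classical
  have hex : ∀ a : A, a ∉ B → ∃ z : A, z ≠ 1 ∧ z * z = 1 ∧ (∀ h : A, h * z = z * h) ∧
      ∀ x : A, x ∉ Subgroup.centralizer {a} → a⁻¹ * x⁻¹ * a * x = z :=
    fun a ha => key hB hcent ha
  choose w hw1 hw2 hw3 hw4 using hex
  obtain ⟨a0, -, ha0⟩ := SetLike.exists_of_lt hB
  set z := w a0 ha0 with hzdef
  have hsame2 : ∀ (a : A) (ha : a ∉ B) (b : A) (hb : b ∉ B),
      b ∉ Subgroup.centralizer {a} → w a ha = w b hb := by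
    intro a ha b hb hab
    have e1 : a⁻¹ * b⁻¹ * a * b = w a ha := hw4 a ha b hab
    have e2 : b⁻¹ * a⁻¹ * b * a = w b hb := hw4 b hb a (cent_symm hab)
    have e3 : w b hb = (w a ha)⁻¹ := by rw [← e1, ← e2]; group
    rw [e3]
    exact (inv_eq_of_mul_eq_one_right (hw2 a ha)).symm
  have hsame : ∀ (b : A) (hb : b ∉ B), z = w b hb := by
    intro b hb
    by_cases hab : b ∈ Subgroup.centralizer {a0}
    · have hc : ∃ c, c ∉ B ∧ c ∉ Subgroup.centralizer {a0} ∧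
          c ∉ Subgroup.centralizer {b} := by
        by_contra hno
        push_neg at hno
        obtain ⟨t, hta, htb⟩ := exists_notmem_pair
          (cent_ne_top (hcent a0 ha0)) (cent_ne_top (hcent b hb))
        have ht_B : t ∈ B := by
          by_contra htB
          exact htb (hno t htB hta)
        have ha0a : a0 ∈ Subgroup.centralizer {a0} := mem_cent_iff.mpr (by group)
        have hat : a0 * t ∉ Subgroup.centralizer {a0} := mul_notin_left ha0a hta
        have hbt : a0 * t ∉ Subgroup.centralizer {b} :=
          mul_notin_left (cent_symm_mem hab) htb
        have hat_B : a0 * t ∈ B := by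
          by_contra hx
          exact hbt (hno (a0 * t) hx hat)
        exact ha0 (by simpa using B.mul_mem hat_B (B.inv_mem ht_B))
      obtain ⟨c, hcB, hca, hcb⟩ := hc
      have h1 : w a0 ha0 = w c hcB := hsame2 a0 ha0 c hcB hca
      have h2 : w b hb = w c hcB := hsame2 b hb c hcB hcb
      rw [hzdef, h1, h2]
    · rw [hzdef]; exact hsame2 a0 ha0 b hb hab
  have hz1 : z ≠ 1 := by rw [hzdef]; exact hw1 a0 ha0
  have hzsq : z * z = 1 := by rw [hzdef]; exact hw2 a0 ha0
  have hzc : ∀ h : A, h * z = z * h := by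
    intro h; rw [hzdef]; exact hw3 a0 ha0 h
  have step1 : ∀ x : A, x ∉ B → ∀ y : A, ⁅y, x⁆ = 1 ∨ ⁅y, x⁆ = z := by
    intro x hx y
    by_cases hy : y⁻¹ ∈ Subgroup.centralizer {x}
    · left
      have e := mem_cent_iff.mp hy
      calc ⁅y, x⁆ = x * (x⁻¹ * (y⁻¹)⁻¹ * x * y⁻¹) * x⁻¹ := by
            rw [commutatorElement_def]; group
        _ = x * 1 * x⁻¹ := by rw [e]
        _ = 1 := by group
    · right
      have e : x⁻¹ * (y⁻¹)⁻¹ * x * y⁻¹ = w x hx := hw4 x hx y⁻¹ hy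
      have hwx : w x hx = z := (hsame x hx).symm
      rw [hwx] at e
      calc ⁅y, x⁆ = x * (x⁻¹ * (y⁻¹)⁻¹ * x * y⁻¹) * x⁻¹ := by
            rw [commutatorElement_def]; group
        _ = x * z * x⁻¹ := by rw [e]
        _ = z := by rw [hzc x]; group
  have stepA : ∀ x : A, x ∉ B → ∀ y : A, ⁅x, y⁆ = 1 ∨ ⁅x, y⁆ = z := by
    intro x hx y
    rcases step1 x hx y with h | h
    · left; rw [← commutatorElement_inv, h]; simp
    · right; rw [← commutatorElement_inv, h]
      exact inv_eq_of_mul_eq_one_right hzsq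
  have step2 : ∀ x y : A, ⁅x, y⁆ = 1 ∨ ⁅x, y⁆ = z := by
    intro x y
    by_cases hyB : y ∈ B
    · by_cases hxB : x ∈ B
      · have hs : a0⁻¹ * x ∉ B := by
          intro h
          have h7 : a0⁻¹ ∈ B := by simpa using B.mul_mem h (B.inv_mem hxB)
          exact ha0 (by simpa using B.inv_mem h7)
        set s := a0⁻¹ * x with hsdef
        have hxeq : x = a0 * s := by rw [hsdef]; group
        have hid : ⁅x, y⁆ = a0 * ⁅s, y⁆ * a0⁻¹ * ⁅a0, y⁆ := by
          rw [hxeq]; simp only [commutatorElement_def]; group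
        rcases stepA s hs y with h1 | h1 <;> rcases stepA a0 ha0 y with h2 | h2
        · left; rw [hid, h1, h2]; group
        · right; rw [hid, h1, h2]; group
        · right; rw [hid, h1, h2, mul_one, hzc a0]; group
        · left; rw [hid, h1, h2, hzc a0]
          simpa [mul_assoc] using hzsq
      · exact stepA x hxB y
    · exact step1 y hyB x
  have hz_mem : z ∈ commutator A := by
    obtain ⟨g0, hg0⟩ : ∃ g0, g0 ∉ Subgroup.centralizer {a0} := by
      by_contra hcon; push_neg at hcon
      exact cent_ne_top (hcent a0 ha0) ((Subgroup.eq_top_iff' _).mpr hcon)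
    have e : a0⁻¹ * g0⁻¹ * a0 * g0 = w a0 ha0 := hw4 a0 ha0 g0 hg0
    have h8 : ⁅a0⁻¹, g0⁻¹⁆ = z := by
      rw [hzdef, ← e, commutatorElement_def]; group
    rw [← h8, commutator_def]
    exact Subgroup.commutator_mem_commutator (Subgroup.mem_top _) (Subgroup.mem_top _)
  have heq : commutator A = Subgroup.zpowers z := by
    apply le_antisymm
    · rw [commutator_def]
      apply Subgroup.commutator_le.mpr
      intro p _ q _
      rcases step2 p q with h | h <;> rw [h]
      · exact Subgroup.one_mem _
      · exact Subgroup.mem_zpowers z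
    · exact Subgroup.zpowers_le.mpr hz_mem
  rw [heq, Nat.card_zpowers]
  haveI : Fact (Nat.Prime 2) := ⟨Nat.prime_two⟩
  exact orderOf_eq_prime (by rw [pow_two]; exact hzsq) hz1
end

section
/- Let R be a group acting faithfully and irreducibly on an elementary abelian 2-group V such that every R-orbit on V \ {1} has size dividing 6. If R acts non-trivially then |V| = 4 and the image of R in Aut(V) ≅ GL_2(2) has order divisible by 3. -/
/-- Step B1: Let `R` act faithfully and irreducibly on an elementary abelian
2-group `V` with every orbit on `V \ {1}` of size dividing 6. If the action is
non-trivial, then `|V| = 4` and the image of `R` in `Aut(V)` has order divisible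
by 3. -/
theorem step_B1 (R V : Type*) [Group R] [CommGroup V] [Finite V]
    (hV2 : ∀ v : V, v ^ 2 = 1)
    (φ : R →* MulAut V) (hfaith : Function.Injective φ)
    (hirr : ∀ W : Subgroup V, (∀ r : R, ∀ v ∈ W, φ r v ∈ W) → W = ⊥ ∨ W = ⊤)
    (horb : ∀ v : V, v ≠ 1 → Nat.card {w : V // ∃ r : R, φ r v = w} ∣ 6)
    (hnontriv : φ ≠ 1) :
    Nat.card V = 4 ∧ 3 ∣ Nat.card φ.range := by
  classical
  have hsq : ∀ a : V, a * a = 1 := fun a => by simpa [pow_two] using hV2 a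
  have hinv : ∀ a : V, a⁻¹ = a := fun a => by
    rw [inv_eq_iff_mul_eq_one, hsq]
  have hsq' : ∀ x y : V, x * (x * y) = y := fun x y => by
    rw [← mul_assoc, hsq, one_mul]
  -- fixed points of the whole action are trivial
  have hfix : ∀ v : V, (∀ r : R, φ r v = v) → v = 1 := by
    intro v hv
    set W : Subgroup V :=
      { carrier := {x | ∀ r : R, φ r x = x}
        one_mem' := fun r => map_one (φ r)
        mul_mem' := fun {a b} ha hb r => by rw [map_mul, ha r, hb r]
        inv_mem' := fun {a} ha r => by rw [map_inv, ha r] } with hW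
    have hWinv : ∀ r : R, ∀ x ∈ W, φ r x ∈ W := by
      intro r x hx s
      rw [hx r]; exact hx s
    rcases hirr W hWinv with h | h
    · have hvW : v ∈ W := hv
      rw [h] at hvW
      exact hvW
    · exfalso
      apply hnontriv
      ext r x
      have hx : x ∈ W := h ▸ Subgroup.mem_top x
      simpa using hx r
  haveI : Finite (MulAut V) :=
    Finite.of_injective (fun e => (e : V → V)) DFunLike.coe_injective
  set G : Subgroup (MulAut V) := φ.range with hG
  haveI : Fact (Nat.Prime 2) := ⟨Nat.prime_two⟩
  obtain ⟨P⟩ : Nonempty (Sylow 2 G) := Sylow.nonempty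
  -- V is nontrivial
  have hVnt : ∃ v : V, v ≠ 1 := by
    by_contra h
    push_neg at h
    exact hnontriv (by ext r x; simp [h x])
  -- 2 divides |V|
  have h2V : 2 ∣ Nat.card V := by
    obtain ⟨v, hv⟩ := hVnt
    have : orderOf v = 2 := by
      have h1 : orderOf v ∣ 2 := orderOf_dvd_of_pow_eq_one (hV2 v)
      rcases (Nat.Prime.eq_one_or_self_of_dvd Nat.prime_two _ h1) with h | h
      · exact absurd (orderOf_eq_one_iff.mp h) hv
      · exact h
    exact this ▸ orderOf_dvd_natCard v
  -- the Sylow 2-subgroup of the image has a nontrivial fixed point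
  have hmod := (P.isPGroup').card_modEq_card_fixedPoints V
  have h2fp : 2 ∣ Nat.card (MulAction.fixedPoints P V) :=
    Nat.modEq_zero_iff_dvd.mp ((hmod.symm.trans (Nat.modEq_zero_iff_dvd.mpr h2V)))
  obtain ⟨v, hvP, hv1⟩ : ∃ v : V, v ∈ MulAction.fixedPoints P V ∧ v ≠ 1 := by
    by_contra h
    push_neg at h
    have hone : (1 : V) ∈ MulAction.fixedPoints P V := fun g => by
      simp
    have : (MulAction.fixedPoints P V : Set V) = {1} := by
      apply Set.eq_singleton_iff_unique_mem.mpr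
      exact ⟨hone, fun x hx => h x hx⟩
    rw [this] at h2fp
    simp at h2fp
  -- P is contained in the stabilizer of v
  have hPle : (P : Subgroup G) ≤ MulAction.stabilizer G v := by
    intro g hg
    exact hvP ⟨g, hg⟩
  -- the orbit of v equals the set appearing in `horb`
  have horbit_eq : MulAction.orbit G v = {w : V | ∃ r : R, φ r v = w} := by
    ext w
    constructor
    · rintro ⟨⟨g, r, rfl⟩, rfl⟩
      exact ⟨r, rfl⟩
    · rintro ⟨r, rfl⟩
      exact ⟨⟨φ r, r, rfl⟩, rfl⟩
  set n := (MulAction.orbit G v).ncard with hn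
  have hn6 : n ∣ 6 := by
    have := horb v hv1
    rw [hn, horbit_eq]
    rw [← Nat.card_coe_set_eq]
    exact this
  have hnidx : (MulAction.stabilizer G v).index = n := MulAction.index_stabilizer G v
  have hnodd : ¬ 2 ∣ n := by
    intro h2n
    have h1 : (MulAction.stabilizer G v).index ∣ (P : Subgroup G).index :=
      Subgroup.index_dvd_of_le hPle
    exact P.not_dvd_index (dvd_trans (hnidx ▸ h2n) h1)
  have hn1 : n ≠ 1 := by
    intro h1
    apply hv1
    apply hfix
    intro r
    have hmem : φ r v ∈ MulAction.orbit G v := by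
      rw [horbit_eq]; exact ⟨r, rfl⟩
    have hvmem : v ∈ MulAction.orbit G v := MulAction.mem_orbit_self v
    exact (Set.ncard_le_one (Set.toFinite _)).mp (by rw [← hn, h1]) _ hmem _ hvmem
  have hn3 : n = 3 := by
    have h6 : n ≤ 6 := Nat.le_of_dvd (by norm_num) hn6
    interval_cases n <;> omega
  -- the divisibility claim
  have hdvd : 3 ∣ Nat.card φ.range := by
    have := Subgroup.index_dvd_card (MulAction.stabilizer G v)
    rw [hnidx, hn3] at this
    exact this
  refine ⟨?_, hdvd⟩
  -- now the cardinality claim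
  have hS3 : ({w : V | ∃ r : R, φ r v = w}).ncard = 3 := by
    rw [← horbit_eq, ← hn, hn3]
  set S : Set V := {w : V | ∃ r : R, φ r v = w} with hSdef
  have hSne1 : ∀ w ∈ S, w ≠ 1 := by
    rintro w ⟨r, rfl⟩ h1
    exact hv1 ((φ r).injective (by rw [h1, map_one]))
  have hmapS : ∀ r : R, ∀ w ∈ S, φ r w ∈ S := by
    rintro r w ⟨s, rfl⟩
    exact ⟨r * s, by rw [map_mul]; rfl⟩
  obtain ⟨a, b, c, hab, hac, hbc, hSeq⟩ := Set.ncard_eq_three.mp hS3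
  set T : Finset V := {a, b, c} with hT
  have hTS : ∀ x, x ∈ T ↔ x ∈ S := by intro x; rw [hSeq]; simp [hT]
  have himg : ∀ r : R, Finset.image (φ r) T = T := by
    intro r
    apply Finset.eq_of_subset_of_card_le
    · intro x hx
      simp only [Finset.mem_image] at hx
      obtain ⟨y, hy, rfl⟩ := hx
      exact (hTS _).mpr (hmapS r y ((hTS y).mp hy))
    · rw [Finset.card_image_of_injective _ (φ r).injective]
  have hprodT : ∏ x ∈ T, x = a * b * c := by
    rw [hT, Finset.prod_insert (by simp [hab, hac]),
      Finset.prod_insert (by simp [hbc]), Finset.prod_singleton, mul_assoc]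
  have hprod : a * b * c = 1 := by
    apply hfix
    intro r
    have h1 : φ r (a * b * c) = ∏ x ∈ T, φ r x := by
      rw [← hprodT, map_prod]
    have h2 : ∏ x ∈ Finset.image (⇑(φ r)) T, x = ∏ x ∈ T, φ r x := by
      rw [Finset.prod_image (fun x _ y _ h => (φ r).injective h)]
    rw [h1, ← h2, himg r, hprodT]
  have hc : c = a * b := by
    have : c = (a * b)⁻¹ := by
      rw [eq_inv_iff_mul_eq_one, mul_comm, hprod]
    rw [this, hinv]
  have ha1 : a ≠ 1 := hSne1 a (hSeq ▸ by simp)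
  have hb1 : b ≠ 1 := hSne1 b (hSeq ▸ by simp)
  have hab1 : a * b ≠ 1 := hc ▸ hSne1 c (hSeq ▸ by simp)
  set Qs : Set V := {1, a, b, a * b} with hQs
  have hmulQ : ∀ x ∈ Qs, ∀ y ∈ Qs, x * y ∈ Qs := by
    intro x hx y hy
    simp only [hQs, Set.mem_insert_iff, Set.mem_singleton_iff] at hx hy ⊢
    rcases hx with rfl | rfl | rfl | rfl <;> rcases hy with rfl | rfl | rfl | rfl <;>
      simp [hsq, hsq', mul_comm, mul_left_comm, mul_assoc]
  set Q : Subgroup V :=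
    { carrier := Qs
      one_mem' := by simp [hQs]
      mul_mem' := fun {x y} hx hy => hmulQ x hx y hy
      inv_mem' := fun {x} hx => by rw [hinv]; exact hx } with hQ
  have hSsubQ : ∀ w ∈ S, w ∈ Q := by
    intro w hw
    rw [hSeq] at hw
    rcases hw with rfl | rfl | rfl <;> simp [hQ, hQs, hc]
  have hQinv : ∀ r : R, ∀ x ∈ Q, φ r x ∈ Q := by
    intro r x hx
    have : x = 1 ∨ x ∈ S := by
      rcases hx with rfl | rfl | rfl | rfl
      · left; rfl
      · right; rw [hSeq]; simp
      · right; rw [hSeq]; simp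
      · right; rw [hSeq]; simp [← hc]
    rcases this with rfl | hxS
    · simp [Q.one_mem]
    · exact hSsubQ _ (hmapS r x hxS)
  have hQtop : Q = ⊤ := by
    rcases hirr Q hQinv with h | h
    · exfalso
      have haQ : a ∈ Q := by simp [hQ, hQs]
      rw [h] at haQ
      exact ha1 haQ
    · exact h
  have huniv : (Set.univ : Set V) = Qs := by
    ext x
    simp only [Set.mem_univ, true_iff]
    have : x ∈ Q := hQtop ▸ Subgroup.mem_top x
    exact this
  have haab : a ≠ a * b := fun h => hb1 (by
    have := hsq' a b; rw [← h] at this; rw [← this, hsq])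
  have hbab : b ≠ a * b := fun h => ha1 (by
    have : b * b = (a * b) * b := by rw [← h]
    rw [hsq, mul_assoc, hsq, mul_one] at this; exact this.symm)
  have hcard : Nat.card V = Qs.ncard := by
    rw [← Set.ncard_univ, huniv]
  rw [hcard, hQs]
  rw [Set.ncard_insert_of_notMem (by simp [Ne, eq_comm, ha1, hb1, hab1]) (Set.toFinite _),
    Set.ncard_insert_of_notMem (by simp [hab, haab]) (Set.toFinite _),
    Set.ncard_insert_of_notMem (by simp [hbab]) (Set.toFinite _),
    Set.ncard_singleton]
end

section
/- Let G be a finite group with a central subgroup Z such that G/Z ≅ A_4. Then G has no conjugacy class of size exactly 2. -/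
/-- Step B6: if `G` is a finite group with a central subgroup `Z` such that
`G/Z ≅ A₄` (phrased via a homomorphism `φ : G → S₄` with central kernel `Z` and
image `A₄`), then `G` has no conjugacy class of size exactly 2. -/
theorem step_B6 (G : Type*) [Group G] [Finite G]
    (φ : G →* Equiv.Perm (Fin 4))
    (hker : φ.ker ≤ Subgroup.center G)
    (hrange : φ.range = alternatingGroup (Fin 4)) :
    ∀ g : G, Nat.card {h : G // IsConj g h} ≠ 2 := by
  intro g hcard
  classical
  -- work in the conjugation action
  set H : Subgroup (ConjAct G) := MulAction.stabilizer (ConjAct G) g with hH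
  -- the conjugacy class of g is the orbit
  have horb : Nat.card {h : G // IsConj g h} = H.index := by
    have e1 : {h : G // IsConj g h} ≃ MulAction.orbit (ConjAct G) g := by
      exact Equiv.subtypeEquiv (Equiv.refl G)
        (fun h => isConj_comm.trans ConjAct.mem_orbit_conjAct.symm)
    have e2 : MulAction.orbit (ConjAct G) g ≃ ConjAct G ⧸ H :=
      MulAction.orbitEquivQuotientStabilizer (ConjAct G) g
    rw [Nat.card_congr (e1.trans e2)]
    rfl
  have hidx : H.index = 2 := by rw [← horb, hcard]
  -- the corresponding homomorphism from ConjAct G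
  set ψ : ConjAct G →* Equiv.Perm (Fin 4) :=
    φ.comp (ConjAct.ofConjAct (G := G)).toMonoidHom with hψ
  have hψrange : ψ.range = alternatingGroup (Fin 4) := by
    rw [← hrange]
    ext x
    constructor
    · rintro ⟨y, rfl⟩; exact ⟨ConjAct.ofConjAct y, rfl⟩
    · rintro ⟨y, rfl⟩; exact ⟨ConjAct.toConjAct y, rfl⟩
  -- kernel of ψ lies in H
  have hkerH : ψ.ker ≤ H := by
    intro x hx
    have hx' : ConjAct.ofConjAct x ∈ φ.ker := hx
    have hc : ConjAct.ofConjAct x ∈ Subgroup.center G := hker hx'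
    have := (Subgroup.mem_center_iff.mp hc) g
    show x • g = g
    rw [ConjAct.smul_def]
    rw [mul_inv_eq_iff_eq_mul, this]
  -- every preimage of a three-cycle lies in H
  have h3 : ∀ σ : Equiv.Perm (Fin 4), σ.IsThreeCycle → σ ∈ H.map ψ := by
    intro σ hσ
    have hσA : σ ∈ alternatingGroup (Fin 4) := hσ.mem_alternatingGroup
    rw [← hψrange] at hσA
    obtain ⟨y, hy⟩ := hσA
    have hy3 : y ^ 3 ∈ ψ.ker := by
      rw [MonoidHom.mem_ker, map_pow, hy, ← hσ.orderOf, pow_orderOf_eq_one]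
    have hy4 : y ^ 4 ∈ H := by
      have := Subgroup.sq_mem_of_index_two hidx (y ^ 2)
      rwa [← pow_mul] at this
    have hyH : y ∈ H := by
      have h4 : y ^ 4 * (y ^ 3)⁻¹ ∈ H := H.mul_mem hy4 (H.inv_mem (hkerH hy3))
      have he : y ^ 4 * (y ^ 3)⁻¹ = y := by group
      rwa [he] at h4
    exact ⟨y, hyH, hy⟩
  -- hence the full alternating group is in the image of H
  have hAle : alternatingGroup (Fin 4) ≤ H.map ψ := by
    rw [← Equiv.Perm.closure_three_cycles_eq_alternating]
    exact (Subgroup.closure_le _).mpr (fun σ hσ => h3 σ hσ)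
  -- hence H = ⊤
  have hHtop : H = ⊤ := by
    rw [Subgroup.eq_top_iff']
    intro x
    have hx : ψ x ∈ alternatingGroup (Fin 4) := by
      rw [← hψrange]; exact ⟨x, rfl⟩
    obtain ⟨y, hyH, hyx⟩ := hAle hx
    have : y⁻¹ * x ∈ ψ.ker := by
      rw [MonoidHom.mem_ker, map_mul, map_inv, hyx, inv_mul_cancel]
    have : y * (y⁻¹ * x) ∈ H := H.mul_mem hyH (hkerH this)
    simpa using this
  rw [hHtop, Subgroup.index_top] at hidx
  exact absurd hidx (by norm_num)
end
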